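/- arXiv:2410.19387 — 4 statements merged into one kernel-verified Lean document; each statement's English description precedes it below -/
import Mathlib

section
/- Let n ∈ ℕ, c, ω > 0 and α > q > 0. For ξ > 0 and s ≥ 0 define g_{n,α,ω}(ξ,s) := ((ξ+c−ω)²+s)^{n/2} / ((ξ+c+ω)²+s)^{(n+α+1)/2}, and set G(n) := ∫₀^∞ φ_q(ξ) · sup_{s≥0} g_{n,α,ω}(ξ,s) dξ. Then sup_{n∈ℕ} G(n) < ∞, and as n → ∞: G(n) = O(n^{q−α}) if q < α < 2q+1; G(n) = O(n^{-(q+1)} log n) if α = 2q+1; and G(n) = O(n^{-(α+1)/2}) if α > 2q+1. -/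
open Filter Topology MeasureTheory

noncomputable section

/-- The weight `φ_q(ξ) = 1` for `ξ < 1` and `ξ^q` for `ξ ≥ 1`. -/
def phiq (q ξ : ℝ) : ℝ := if ξ < 1 then 1 else ξ ^ q

/-- `g_{n,α,ω}(ξ,s) = ((ξ+c-ω)²+s)^{n/2} / ((ξ+c+ω)²+s)^{(n+α+1)/2}`. -/
def gfun (n : ℕ) (α c ω ξ s : ℝ) : ℝ :=
  ((ξ + c - ω) ^ 2 + s) ^ ((n : ℝ) / 2) / ((ξ + c + ω) ^ 2 + s) ^ (((n : ℝ) + α + 1) / 2)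

/-- `G(n) = ∫₀^∞ φ_q(ξ) sup_{s ≥ 0} g_{n,α,ω}(ξ,s) dξ` as an extended real number. -/
def Gint (α c ω q : ℝ) (n : ℕ) : ENNReal :=
  ∫⁻ ξ in Set.Ioi (0 : ℝ),
    ENNReal.ofReal (phiq q ξ * ⨆ s : Set.Ici (0 : ℝ), gfun n α c ω ξ s)

/-! ### Auxiliary lemmas -/

lemma aux_rpow_le_exp {β : ℝ} (hβ : 0 < β) {x : ℝ} (hx : 0 ≤ x) :
    x ^ β ≤ β ^ β * Real.exp x := by
  have h1 : x ≤ β * Real.exp (x / β) := by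
    have h := Real.add_one_le_exp (x / β)
    have h2 : x / β ≤ Real.exp (x / β) := by linarith
    calc x = β * (x / β) := by field_simp
    _ ≤ β * Real.exp (x / β) := by nlinarith
  calc x ^ β ≤ (β * Real.exp (x / β)) ^ β := Real.rpow_le_rpow hx h1 hβ.le
  _ = β ^ β * Real.exp (x / β) ^ β := Real.mul_rpow hβ.le (Real.exp_nonneg _)
  _ = β ^ β * Real.exp x := by rw [← Real.exp_mul, div_mul_cancel₀ _ hβ.ne']

lemma aux_texp {β : ℝ} (hβ : 0 < β) {m : ℝ} (hm : 0 < m) {t : ℝ} (ht : 0 ≤ t) :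
    t ^ β * Real.exp (-(t * m / 2)) ≤ (2 * β / m) ^ β := by
  have hx : 0 ≤ t * m / 2 := by positivity
  have h1 : (t * m / 2) ^ β ≤ β ^ β * Real.exp (t * m / 2) := aux_rpow_le_exp hβ hx
  have h2 : t ^ β = (t * m / 2) ^ β * (2 / m) ^ β := by
    rw [← Real.mul_rpow hx (by positivity)]
    congr 1
    field_simp
  have h3 : (2 * β / m) ^ β = β ^ β * (2 / m) ^ β := by
    rw [← Real.mul_rpow hβ.le (by positivity)]
    congr 1
    ring
  calc t ^ β * Real.exp (-(t * m / 2))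
      = (t * m / 2) ^ β * Real.exp (-(t * m / 2)) * (2 / m) ^ β := by rw [h2]; ring
    _ ≤ β ^ β * Real.exp (t * m / 2) * Real.exp (-(t * m / 2)) * (2 / m) ^ β := by
        have h4 : (0:ℝ) ≤ Real.exp (-(t * m / 2)) := Real.exp_nonneg _
        have h5 : (0:ℝ) ≤ (2 / m) ^ β := by positivity
        exact mul_le_mul_of_nonneg_right (mul_le_mul_of_nonneg_right h1 h4) h5
    _ = β ^ β * (2 / m) ^ β := by
        rw [mul_assoc (β ^ β), ← Real.exp_add, add_neg_cancel, Real.exp_zero, mul_one]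
    _ = (2 * β / m) ^ β := h3.symm

lemma gfun_le_bound1 {α c ω ξ s : ℝ} (n : ℕ) (hc : 0 < c) (hω : 0 < ω)
    (hξ : 0 < ξ) (hs : 0 ≤ s) (hα1 : 0 ≤ α + 1) :
    gfun n α c ω ξ s ≤ (ξ + c + ω) ^ (-(α + 1)) := by
  have hB : 0 < ξ + c + ω := by linarith
  have hA : 0 ≤ (ξ + c - ω) ^ 2 + s := by positivity
  have hBp : 0 < (ξ + c + ω) ^ 2 + s := by positivity
  have hA2B2 : (ξ + c - ω) ^ 2 + s ≤ (ξ + c + ω) ^ 2 + s := by nlinarith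
  calc gfun n α c ω ξ s
      ≤ ((ξ + c + ω) ^ 2 + s) ^ ((n : ℝ) / 2) / ((ξ + c + ω) ^ 2 + s) ^ (((n : ℝ) + α + 1) / 2) := by
        unfold gfun
        gcongr
    _ = ((ξ + c + ω) ^ 2 + s) ^ (-((α + 1) / 2)) := by
        rw [← Real.rpow_sub hBp]
        congr 1
        ring
    _ ≤ ((ξ + c + ω) ^ 2) ^ (-((α + 1) / 2)) :=
        Real.rpow_le_rpow_of_nonpos (by positivity) (le_add_of_nonneg_right hs) (by linarith)
    _ = (ξ + c + ω) ^ (-(α + 1)) := by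
        rw [← Real.rpow_natCast (ξ + c + ω) 2, ← Real.rpow_mul hB.le]
        norm_num
        congr 1
        ring

lemma gfun_le_bound2 {α c ω ξ s : ℝ} {n : ℕ} (hn : 1 ≤ n) (hc : 0 < c) (hω : 0 < ω)
    (hξ : 0 < ξ) (hs : 0 ≤ s) (hα1 : 0 < α + 1) :
    gfun n α c ω ξ s ≤
      (2 * ((α + 1) / 2) / n) ^ ((α + 1) / 2) * (4 * ω * (ξ + c)) ^ (-((α + 1) / 2)) := by
  have hβ : 0 < (α + 1) / 2 := by linarith
  have hnpos : (0:ℝ) < n := by exact_mod_cast hn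
  have ha : 0 < ξ + c := by linarith
  have hD : 0 < 4 * ω * (ξ + c) := by positivity
  have hv : 0 < (ξ + c + ω) ^ 2 + s := by positivity
  set D := 4 * ω * (ξ + c) with hDdef
  set v := (ξ + c + ω) ^ 2 + s with hvdef
  have hsub : (ξ + c - ω) ^ 2 + s = v - D := by rw [hvdef, hDdef]; ring
  have hvD : D ≤ v := by
    have : 0 ≤ (ξ + c - ω) ^ 2 + s := by positivity
    linarith [hsub ▸ this]
  set t := D / v with htdef
  have ht0 : 0 < t := div_pos hD hv
  have ht1 : t ≤ 1 := (div_le_one hv).mpr hvD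
  have hvt : v - D = v * (1 - t) := by
    have hvt' : v * t = D := by rw [htdef]; field_simp [hv.ne']
    linear_combination hvt'
  have hexp : (1 - t) ^ ((n : ℝ) / 2) ≤ Real.exp (-(t * n / 2)) := by
    have h1 : 1 - t ≤ Real.exp (-t) := by
      have := Real.add_one_le_exp (-t); linarith
    calc (1 - t) ^ ((n : ℝ) / 2) ≤ Real.exp (-t) ^ ((n : ℝ) / 2) :=
          Real.rpow_le_rpow (by linarith) h1 (by positivity)
      _ = Real.exp (-(t * n / 2)) := by
          rw [← Real.exp_mul]
          congr 1
          ring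
  have hnum : ((ξ + c - ω) ^ 2 + s) ^ ((n : ℝ) / 2) ≤
      v ^ ((n : ℝ) / 2) * Real.exp (-(t * n / 2)) := by
    rw [hsub, hvt, Real.mul_rpow hv.le (by linarith)]
    exact mul_le_mul_of_nonneg_left hexp (Real.rpow_nonneg hv.le _)
  have hvinv : v ^ (-((α + 1) / 2)) = D ^ (-((α + 1) / 2)) * t ^ ((α + 1) / 2) := by
    have hveq : v = D / t := by
      rw [htdef]; field_simp
    rw [hveq, Real.div_rpow hD.le ht0.le, Real.rpow_neg ht0.le, div_eq_mul_inv, inv_inv]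
  calc gfun n α c ω ξ s
      ≤ (v ^ ((n : ℝ) / 2) * Real.exp (-(t * n / 2))) / v ^ (((n : ℝ) + α + 1) / 2) := by
        unfold gfun
        rw [← hvdef]
        gcongr
    _ = Real.exp (-(t * n / 2)) * v ^ (-((α + 1) / 2)) := by
        rw [mul_comm (v ^ ((n:ℝ) / 2)), mul_div_assoc, ← Real.rpow_sub hv]
        congr 2
        ring
    _ = (t ^ ((α + 1) / 2) * Real.exp (-(t * n / 2))) * D ^ (-((α + 1) / 2)) := by
        rw [hvinv]; ring
    _ ≤ (2 * ((α + 1) / 2) / n) ^ ((α + 1) / 2) * D ^ (-((α + 1) / 2)) := by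
        have := aux_texp hβ hnpos ht0.le
        exact mul_le_mul_of_nonneg_right this (Real.rpow_nonneg hD.le _)

lemma lint_tail {a C r : ℝ} (ha : 0 < a) (hr : r < -1) (hC : 0 ≤ C) :
    ∫⁻ ξ in Set.Ioi a, ENNReal.ofReal (C * ξ ^ r) =
      ENNReal.ofReal (C * (-a ^ (r + 1) / (r + 1))) := by
  have hint : IntegrableOn (fun ξ : ℝ => C * ξ ^ r) (Set.Ioi a) :=
    (integrableOn_Ioi_rpow_of_lt hr ha).const_mul C
  rw [← MeasureTheory.ofReal_integral_eq_lintegral_ofReal hint ?_]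
  · congr 1
    rw [MeasureTheory.integral_const_mul, integral_Ioi_rpow_of_lt hr ha]
  · rw [EventuallyLE, ae_restrict_iff' measurableSet_Ioi]
    filter_upwards with ξ hξ
    have : (0:ℝ) < ξ := ha.trans hξ
    positivity

lemma lint_mid {a b C r : ℝ} (ha : 0 < a) (hab : a ≤ b) (hC : 0 ≤ C) :
    ∫⁻ ξ in Set.Ioc a b, ENNReal.ofReal (C * ξ ^ r) =
      ENNReal.ofReal (C * ∫ x in a..b, x ^ r) := by
  have hcont : ContinuousOn (fun ξ : ℝ => C * ξ ^ r) (Set.Icc a b) := by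
    apply ContinuousOn.mul continuousOn_const
    apply ContinuousOn.rpow_const continuousOn_id
    intro x hx
    exact Or.inl (ne_of_gt (ha.trans_le hx.1))
  have hint : IntegrableOn (fun ξ : ℝ => C * ξ ^ r) (Set.Ioc a b) :=
    (hcont.integrableOn_Icc).mono_set Set.Ioc_subset_Icc_self
  rw [← MeasureTheory.ofReal_integral_eq_lintegral_ofReal hint ?_]
  · congr 1
    rw [intervalIntegral.integral_of_le hab, MeasureTheory.integral_const_mul]
  · rw [EventuallyLE, ae_restrict_iff' measurableSet_Ioc]
    filter_upwards with ξ hξ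
    have : (0:ℝ) < ξ := ha.trans hξ.1
    positivity

lemma lint_const {K : ℝ} :
    ∫⁻ ξ in Set.Ioc (0:ℝ) 1, ENNReal.ofReal K = ENNReal.ofReal K := by
  rw [MeasureTheory.setLIntegral_const, Real.volume_Ioc]
  norm_num

lemma lint_split (F : ℝ → ENNReal) {b : ℝ} (hb : (1:ℝ) ≤ b) :
    ∫⁻ ξ in Set.Ioi (0:ℝ), F ξ =
      (∫⁻ ξ in Set.Ioc (0:ℝ) 1, F ξ) + (∫⁻ ξ in Set.Ioc (1:ℝ) b, F ξ)
        + ∫⁻ ξ in Set.Ioi b, F ξ := by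
  have hd1 : Disjoint (Set.Ioc (0:ℝ) 1) (Set.Ioc 1 b ∪ Set.Ioi b) := by
    refine (Set.Ioc_disjoint_Ioi (le_refl (1:ℝ))).mono_right ?_
    rw [Set.Ioc_union_Ioi_eq_Ioi hb]
  rw [← Set.Ioc_union_Ioi_eq_Ioi (zero_le_one), ← Set.Ioc_union_Ioi_eq_Ioi hb,
    MeasureTheory.lintegral_union (measurableSet_Ioc.union measurableSet_Ioi) hd1,
    MeasureTheory.lintegral_union measurableSet_Ioi (Set.Ioc_disjoint_Ioi le_rfl), add_assoc]

lemma lint_split2 (F : ℝ → ENNReal) :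
    ∫⁻ ξ in Set.Ioi (0:ℝ), F ξ =
      (∫⁻ ξ in Set.Ioc (0:ℝ) 1, F ξ) + ∫⁻ ξ in Set.Ioi (1:ℝ), F ξ := by
  rw [← Set.Ioc_union_Ioi_eq_Ioi (zero_le_one),
    MeasureTheory.lintegral_union measurableSet_Ioi (Set.Ioc_disjoint_Ioi le_rfl)]

lemma sup_gfun_le {n : ℕ} {α c ω ξ U : ℝ}
    (h : ∀ s : ℝ, 0 ≤ s → gfun n α c ω ξ s ≤ U) :
    (⨆ s : Set.Ici (0:ℝ), gfun n α c ω ξ (s : ℝ)) ≤ U := by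
  haveI : Nonempty (Set.Ici (0:ℝ)) := ⟨⟨0, Set.self_mem_Ici⟩⟩
  exact ciSup_le fun s => h s.1 s.2

lemma phiq_nonneg (q ξ : ℝ) : 0 ≤ phiq q ξ := by
  unfold phiq
  split
  · norm_num
  · rename_i h
    exact Real.rpow_nonneg (by linarith [not_lt.mp h]) q

lemma phiq_eq_one {q ξ : ℝ} (h0 : 0 < ξ) (h1 : ξ ≤ 1) : phiq q ξ = 1 := by
  unfold phiq
  split
  · rfl
  · rename_i h
    have : ξ = 1 := le_antisymm h1 (not_lt.mp h)
    rw [this, Real.one_rpow]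

lemma phiq_eq_rpow {q ξ : ℝ} (h1 : 1 ≤ ξ) : phiq q ξ = ξ ^ q := by
  unfold phiq
  rw [if_neg (not_lt.mpr h1)]

lemma piece_mono {s : Set ℝ} (hs : MeasurableSet s) {f g : ℝ → ℝ}
    (h : ∀ ξ ∈ s, f ξ ≤ g ξ) :
    ∫⁻ ξ in s, ENNReal.ofReal (f ξ) ≤ ∫⁻ ξ in s, ENNReal.ofReal (g ξ) :=
  MeasureTheory.setLIntegral_mono' hs fun ξ hξ => ENNReal.ofReal_le_ofReal (h ξ hξ)

/-- Lemma 3.7 (the `g` part): for `c, ω > 0` and `α > q > 0`, the quantities `G(n)` are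
uniformly bounded in `n`, and as `n → ∞`:
`G(n) = O(n^{q-α})` if `q < α < 2q+1`, `G(n) = O(n^{-(q+1)} log n)` if `α = 2q+1`, and
`G(n) = O(n^{-(α+1)/2})` if `α > 2q+1`. -/
theorem Gint_bounds
    (α c ω q : ℝ) (hc : 0 < c) (hω : 0 < ω) (hq : 0 < q) (hα : q < α) :
    (∃ C : ℝ, ∀ n : ℕ, 1 ≤ n → Gint α c ω q n ≤ ENNReal.ofReal C) ∧
    (α < 2 * q + 1 →
      ∃ M : ℝ, 0 < M ∧ ∃ N : ℕ, ∀ n : ℕ, N ≤ n →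
        Gint α c ω q n ≤ ENNReal.ofReal (M * (n : ℝ) ^ (q - α))) ∧
    (α = 2 * q + 1 →
      ∃ M : ℝ, 0 < M ∧ ∃ N : ℕ, ∀ n : ℕ, N ≤ n →
        Gint α c ω q n ≤ ENNReal.ofReal (M * Real.log (n : ℝ) * (n : ℝ) ^ (-(q + 1)))) ∧
    (2 * q + 1 < α →
      ∃ M : ℝ, 0 < M ∧ ∃ N : ℕ, ∀ n : ℕ, N ≤ n →
        Gint α c ω q n ≤ ENNReal.ofReal (M * (n : ℝ) ^ (-((α + 1) / 2)))) := by
  have hα1 : (0:ℝ) < α + 1 := by linarith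
  set β : ℝ := (α + 1) / 2 with hβdef
  have hβ : 0 < β := by rw [hβdef]; linarith
  set K2 : ℝ := (2 * β) ^ β * (4 * ω) ^ (-β) with hK2def
  have hK2 : 0 < K2 := by rw [hK2def]; positivity
  -- the first (n-independent) pointwise bound on the sup
  have hsup1 : ∀ (n : ℕ) (ξ : ℝ), 0 < ξ →
      (⨆ s : Set.Ici (0:ℝ), gfun n α c ω ξ (s : ℝ)) ≤ (ξ + c + ω) ^ (-(α + 1)) :=
    fun n ξ hξ => sup_gfun_le fun s hs => gfun_le_bound1 n hc hω hξ hs hα1.le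
  -- the second (n-decaying) pointwise bound on the sup
  have hsup2 : ∀ (n : ℕ), 1 ≤ n → ∀ (ξ : ℝ), 0 < ξ →
      (⨆ s : Set.Ici (0:ℝ), gfun n α c ω ξ (s : ℝ)) ≤
        K2 * (n : ℝ) ^ (-β) * (ξ + c) ^ (-β) := by
    intro n hn ξ hξ
    have hnpos : (0:ℝ) < n := by exact_mod_cast hn
    refine sup_gfun_le fun s hs => (gfun_le_bound2 hn hc hω hξ hs hα1).trans (le_of_eq ?_)
    show (2 * β / (n:ℝ)) ^ β * (4 * ω * (ξ + c)) ^ (-β) = K2 * (n:ℝ) ^ (-β) * (ξ + c) ^ (-β)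
    have h1 : (2 * β / (n:ℝ)) ^ β = (2 * β) ^ β * (n:ℝ) ^ (-β) := by
      rw [Real.div_rpow (by positivity) hnpos.le, Real.rpow_neg hnpos.le, div_eq_mul_inv]
    rw [h1, Real.mul_rpow (by positivity : (0:ℝ) ≤ 4 * ω) (by positivity : (0:ℝ) ≤ ξ + c),
      hK2def]
    ring
  -- splitting of the integral
  have hGs2 : ∀ n : ℕ, Gint α c ω q n =
      (∫⁻ ξ in Set.Ioc (0:ℝ) 1,
        ENNReal.ofReal (phiq q ξ * ⨆ s : Set.Ici (0:ℝ), gfun n α c ω ξ (s:ℝ)))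
      + ∫⁻ ξ in Set.Ioi (1:ℝ),
        ENNReal.ofReal (phiq q ξ * ⨆ s : Set.Ici (0:ℝ), gfun n α c ω ξ (s:ℝ)) :=
    fun n => lint_split2 _
  have hGs3 : ∀ (n : ℕ) (b : ℝ), (1:ℝ) ≤ b → Gint α c ω q n =
      (∫⁻ ξ in Set.Ioc (0:ℝ) 1,
        ENNReal.ofReal (phiq q ξ * ⨆ s : Set.Ici (0:ℝ), gfun n α c ω ξ (s:ℝ)))
      + (∫⁻ ξ in Set.Ioc (1:ℝ) b,
        ENNReal.ofReal (phiq q ξ * ⨆ s : Set.Ici (0:ℝ), gfun n α c ω ξ (s:ℝ)))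
      + ∫⁻ ξ in Set.Ioi b,
        ENNReal.ofReal (phiq q ξ * ⨆ s : Set.Ici (0:ℝ), gfun n α c ω ξ (s:ℝ)) :=
    fun n b hb => lint_split _ hb
  -- piece bounds
  have hP0b1 : ∀ n : ℕ,
      (∫⁻ ξ in Set.Ioc (0:ℝ) 1,
        ENNReal.ofReal (phiq q ξ * ⨆ s : Set.Ici (0:ℝ), gfun n α c ω ξ (s:ℝ)))
      ≤ ENNReal.ofReal (c ^ (-(α + 1))) := by
    intro n
    refine le_trans (piece_mono measurableSet_Ioc ?_) (le_of_eq lint_const)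
    intro ξ hξ
    rw [phiq_eq_one hξ.1 hξ.2, one_mul]
    refine (hsup1 n ξ hξ.1).trans ?_
    exact Real.rpow_le_rpow_of_nonpos hc (by linarith [hξ.1]) (by linarith)
  have hP0b2 : ∀ n : ℕ, 1 ≤ n →
      (∫⁻ ξ in Set.Ioc (0:ℝ) 1,
        ENNReal.ofReal (phiq q ξ * ⨆ s : Set.Ici (0:ℝ), gfun n α c ω ξ (s:ℝ)))
      ≤ ENNReal.ofReal (K2 * c ^ (-β) * (n:ℝ) ^ (-β)) := by
    intro n hn
    refine le_trans (piece_mono measurableSet_Ioc ?_) (le_of_eq lint_const)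
    intro ξ hξ
    rw [phiq_eq_one hξ.1 hξ.2, one_mul]
    refine (hsup2 n hn ξ hξ.1).trans ?_
    have h1 : (ξ + c) ^ (-β) ≤ c ^ (-β) :=
      Real.rpow_le_rpow_of_nonpos hc (by linarith [hξ.1]) (by linarith)
    calc K2 * (n:ℝ) ^ (-β) * (ξ + c) ^ (-β) ≤ K2 * (n:ℝ) ^ (-β) * c ^ (-β) := by
          refine mul_le_mul_of_nonneg_left h1 ?_
          positivity
      _ = K2 * c ^ (-β) * (n:ℝ) ^ (-β) := by ring
  -- pointwise bound on ξ ≥ 1 with the first estimate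
  have hkey1 : ∀ (n : ℕ) (ξ : ℝ), 1 < ξ →
      phiq q ξ * (⨆ s : Set.Ici (0:ℝ), gfun n α c ω ξ (s:ℝ)) ≤ (1:ℝ) * ξ ^ (q - α - 1) := by
    intro n ξ hξ
    have hξ0 : (0:ℝ) < ξ := by linarith
    rw [phiq_eq_rpow hξ.le]
    calc ξ ^ q * (⨆ s : Set.Ici (0:ℝ), gfun n α c ω ξ (s:ℝ))
        ≤ ξ ^ q * (ξ + c + ω) ^ (-(α + 1)) :=
          mul_le_mul_of_nonneg_left (hsup1 n ξ hξ0) (Real.rpow_nonneg hξ0.le q)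
      _ ≤ ξ ^ q * ξ ^ (-(α + 1)) := by
          refine mul_le_mul_of_nonneg_left ?_ (Real.rpow_nonneg hξ0.le q)
          exact Real.rpow_le_rpow_of_nonpos hξ0 (by linarith) (by linarith)
      _ = (1:ℝ) * ξ ^ (q - α - 1) := by
          rw [one_mul, ← Real.rpow_add hξ0]
          congr 1
          ring
  -- pointwise bound on ξ ≥ 1 with the second estimate
  have hkey2 : ∀ (n : ℕ), 1 ≤ n → ∀ (ξ : ℝ), 1 < ξ →
      phiq q ξ * (⨆ s : Set.Ici (0:ℝ), gfun n α c ω ξ (s:ℝ))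
        ≤ (K2 * (n:ℝ) ^ (-β)) * ξ ^ (q - β) := by
    intro n hn ξ hξ
    have hξ0 : (0:ℝ) < ξ := by linarith
    rw [phiq_eq_rpow hξ.le]
    calc ξ ^ q * (⨆ s : Set.Ici (0:ℝ), gfun n α c ω ξ (s:ℝ))
        ≤ ξ ^ q * (K2 * (n:ℝ) ^ (-β) * (ξ + c) ^ (-β)) :=
          mul_le_mul_of_nonneg_left (hsup2 n hn ξ hξ0) (Real.rpow_nonneg hξ0.le q)
      _ ≤ ξ ^ q * (K2 * (n:ℝ) ^ (-β) * ξ ^ (-β)) := by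
          refine mul_le_mul_of_nonneg_left ?_ (Real.rpow_nonneg hξ0.le q)
          refine mul_le_mul_of_nonneg_left ?_ (by positivity)
          exact Real.rpow_le_rpow_of_nonpos hξ0 (by linarith) (by linarith)
      _ = (K2 * (n:ℝ) ^ (-β)) * (ξ ^ q * ξ ^ (-β)) := by ring
      _ = (K2 * (n:ℝ) ^ (-β)) * ξ ^ (q - β) := by
          rw [← Real.rpow_add hξ0, sub_eq_add_neg q β]
  -- the tail piece with the first estimate
  have hPtail1 : ∀ (n : ℕ) (a : ℝ), 1 ≤ a →
      (∫⁻ ξ in Set.Ioi a,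
        ENNReal.ofReal (phiq q ξ * ⨆ s : Set.Ici (0:ℝ), gfun n α c ω ξ (s:ℝ)))
      ≤ ENNReal.ofReal (a ^ (q - α) / (α - q)) := by
    intro n a ha
    have hapos : (0:ℝ) < a := lt_of_lt_of_le one_pos ha
    refine le_trans (piece_mono measurableSet_Ioi
      (fun ξ hξ => hkey1 n ξ (lt_of_le_of_lt ha hξ))) ?_
    rw [lint_tail hapos (by linarith) zero_le_one]
    refine le_of_eq ?_
    congr 1
    rw [one_mul, show q - α - 1 + 1 = q - α by ring, neg_div,
      show α - q = -(q - α) by ring, div_neg]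
  -- the middle piece with the second estimate
  have hPmid : ∀ (n : ℕ), 1 ≤ n → ∀ (b : ℝ), 1 ≤ b →
      (∫⁻ ξ in Set.Ioc (1:ℝ) b,
        ENNReal.ofReal (phiq q ξ * ⨆ s : Set.Ici (0:ℝ), gfun n α c ω ξ (s:ℝ)))
      ≤ ENNReal.ofReal (K2 * (n:ℝ) ^ (-β) * ∫ x in (1:ℝ)..b, x ^ (q - β)) := by
    intro n hn b hb
    refine le_trans (piece_mono measurableSet_Ioc
      (fun ξ hξ => hkey2 n hn ξ hξ.1)) ?_
    rw [lint_mid one_pos hb (by positivity)]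
  ------------------------------------------------------------------
  refine ⟨⟨c ^ (-(α + 1)) + 1 / (α - q), fun n _ => ?_⟩, ?_, ?_, ?_⟩
  -- Part 1 : uniform boundedness
  · rw [hGs2 n]
    calc _ ≤ ENNReal.ofReal (c ^ (-(α + 1))) + ENNReal.ofReal ((1:ℝ) ^ (q - α) / (α - q)) :=
          add_le_add (hP0b1 n) (hPtail1 n 1 le_rfl)
      _ = ENNReal.ofReal (c ^ (-(α + 1)) + 1 / (α - q)) := by
          rw [Real.one_rpow, ← ENNReal.ofReal_add (by positivity)
            (div_nonneg zero_le_one (by linarith))]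
  -- Part 2 : q < α < 2q+1
  · intro hcase
    have hqβ1 : 0 < q - β + 1 := by rw [hβdef]; linarith
    have hβqα : -β ≤ q - α := by rw [hβdef]; linarith
    have hM : 0 < K2 * c ^ (-β) + K2 / (q - β + 1) + 1 / (α - q) := by
      have h1 : 0 < K2 * c ^ (-β) := by positivity
      have h2 : 0 < K2 / (q - β + 1) := div_pos hK2 hqβ1
      have h3 : 0 < 1 / (α - q) := by
        apply div_pos one_pos
        linarith
      linarith
    refine ⟨K2 * c ^ (-β) + K2 / (q - β + 1) + 1 / (α - q), hM, 1, fun n hn => ?_⟩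
    have hn1 : (1:ℝ) ≤ (n:ℝ) := by exact_mod_cast hn
    have hnpos : (0:ℝ) < n := by linarith
    have hnqα : (0:ℝ) ≤ (n:ℝ) ^ (q - α) := Real.rpow_nonneg hnpos.le _
    rw [hGs3 n (n:ℝ) hn1]
    have B0 : (∫⁻ ξ in Set.Ioc (0:ℝ) 1,
        ENNReal.ofReal (phiq q ξ * ⨆ s : Set.Ici (0:ℝ), gfun n α c ω ξ (s:ℝ))) ≤ ENNReal.ofReal (K2 * c ^ (-β) * (n:ℝ) ^ (q - α)) := by
      refine (hP0b2 n hn).trans (ENNReal.ofReal_le_ofReal ?_)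
      refine mul_le_mul_of_nonneg_left ?_ (by positivity)
      exact Real.rpow_le_rpow_of_exponent_le hn1 hβqα
    have Bmid : (∫⁻ ξ in Set.Ioc (1:ℝ) (n:ℝ),
        ENNReal.ofReal (phiq q ξ * ⨆ s : Set.Ici (0:ℝ), gfun n α c ω ξ (s:ℝ))) ≤ ENNReal.ofReal (K2 / (q - β + 1) * (n:ℝ) ^ (q - α)) := by
      refine (hPmid n hn (n:ℝ) hn1).trans (ENNReal.ofReal_le_ofReal ?_)
      rw [integral_rpow (Or.inl (by linarith : (-1:ℝ) < q - β))]
      have hmul : (n:ℝ) ^ (-β) * (n:ℝ) ^ (q - β + 1) = (n:ℝ) ^ (q - α) := by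
        rw [← Real.rpow_add hnpos]
        congr 1
        rw [hβdef]
        ring
      calc K2 * (n:ℝ) ^ (-β) * (((n:ℝ) ^ (q - β + 1) - 1 ^ (q - β + 1)) / (q - β + 1))
          ≤ K2 * (n:ℝ) ^ (-β) * ((n:ℝ) ^ (q - β + 1) / (q - β + 1)) := by
            rw [Real.one_rpow]
            refine mul_le_mul_of_nonneg_left ?_ (by positivity)
            refine (div_le_div_iff_of_pos_right hqβ1).mpr ?_
            linarith
        _ = K2 / (q - β + 1) * ((n:ℝ) ^ (-β) * (n:ℝ) ^ (q - β + 1)) := by ring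
        _ = K2 / (q - β + 1) * (n:ℝ) ^ (q - α) := by rw [hmul]
    have Btail : (∫⁻ ξ in Set.Ioi ((n:ℝ)),
        ENNReal.ofReal (phiq q ξ * ⨆ s : Set.Ici (0:ℝ), gfun n α c ω ξ (s:ℝ))) ≤ ENNReal.ofReal (1 / (α - q) * (n:ℝ) ^ (q - α)) := by
      refine (hPtail1 n (n:ℝ) hn1).trans (le_of_eq ?_)
      congr 1
      ring
    calc _ ≤ ENNReal.ofReal (K2 * c ^ (-β) * (n:ℝ) ^ (q - α))
          + ENNReal.ofReal (K2 / (q - β + 1) * (n:ℝ) ^ (q - α))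
          + ENNReal.ofReal (1 / (α - q) * (n:ℝ) ^ (q - α)) :=
        add_le_add (add_le_add B0 Bmid) Btail
      _ = ENNReal.ofReal ((K2 * c ^ (-β) + K2 / (q - β + 1) + 1 / (α - q)) * (n:ℝ) ^ (q - α)) := by
        have ht1 : (0:ℝ) ≤ K2 * c ^ (-β) * (n:ℝ) ^ (q - α) := by positivity
        have ht2 : (0:ℝ) ≤ K2 / (q - β + 1) * (n:ℝ) ^ (q - α) :=
          mul_nonneg (div_nonneg hK2.le hqβ1.le) hnqα
        have ht3 : (0:ℝ) ≤ 1 / (α - q) * (n:ℝ) ^ (q - α) :=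
          mul_nonneg (div_nonneg zero_le_one (by linarith)) hnqα
        rw [← ENNReal.ofReal_add ht1 ht2, ← ENNReal.ofReal_add (add_nonneg ht1 ht2) ht3]
        congr 1
        ring
  -- Part 3 : α = 2q+1
  · intro hcase
    have hβq : β = q + 1 := by rw [hβdef, hcase]; ring
    have hαq : α - q = q + 1 := by rw [hcase]; ring
    have hM : 0 < K2 * c ^ (-β) + K2 + 1 / (α - q) := by
      have h1 : 0 < K2 * c ^ (-β) := by positivity
      have h3 : 0 < 1 / (α - q) := by
        apply div_pos one_pos
        linarith
      linarith
    refine ⟨K2 * c ^ (-β) + K2 + 1 / (α - q), hM, 3, fun n hn => ?_⟩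
    have hn3 : (3:ℝ) ≤ (n:ℝ) := by exact_mod_cast hn
    have hn1 : (1:ℝ) ≤ (n:ℝ) := by linarith
    have hnpos : (0:ℝ) < n := by linarith
    have hlog : 1 ≤ Real.log (n:ℝ) := by
      rw [Real.le_log_iff_exp_le hnpos]
      calc Real.exp 1 ≤ 2.7182818286 := Real.exp_one_lt_d9.le
        _ ≤ 3 := by norm_num
        _ ≤ (n:ℝ) := hn3
    have hlog0 : (0:ℝ) ≤ Real.log (n:ℝ) := by linarith
    have hnq1 : (0:ℝ) ≤ (n:ℝ) ^ (-(q + 1)) := Real.rpow_nonneg hnpos.le _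
    have hfac : ∀ a : ℝ, 0 ≤ a →
        a * (n:ℝ) ^ (-(q + 1)) ≤ a * Real.log (n:ℝ) * (n:ℝ) ^ (-(q + 1)) := by
      intro a ha
      nlinarith [mul_nonneg (mul_nonneg ha hnq1) (sub_nonneg.mpr hlog)]
    have hnββ : (n:ℝ) ^ (-β) = (n:ℝ) ^ (-(q + 1)) := by rw [hβq]
    rw [hGs3 n (n:ℝ) hn1]
    have B0 : (∫⁻ ξ in Set.Ioc (0:ℝ) 1,
        ENNReal.ofReal (phiq q ξ * ⨆ s : Set.Ici (0:ℝ), gfun n α c ω ξ (s:ℝ))) ≤ ENNReal.ofReal (K2 * c ^ (-β) * Real.log (n:ℝ) * (n:ℝ) ^ (-(q + 1))) := by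
      refine (hP0b2 n (by omega)).trans (ENNReal.ofReal_le_ofReal ?_)
      rw [hnββ]
      exact hfac _ (by positivity)
    have Bmid : (∫⁻ ξ in Set.Ioc (1:ℝ) (n:ℝ),
        ENNReal.ofReal (phiq q ξ * ⨆ s : Set.Ici (0:ℝ), gfun n α c ω ξ (s:ℝ))) ≤ ENNReal.ofReal (K2 * Real.log (n:ℝ) * (n:ℝ) ^ (-(q + 1))) := by
      refine (hPmid n (by omega) (n:ℝ) hn1).trans (ENNReal.ofReal_le_ofReal (le_of_eq ?_))
      have hexp : q - β = -1 := by rw [hβq]; ring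
      have hzero : (0:ℝ) ∉ Set.uIcc (1:ℝ) (n:ℝ) := by
        rw [Set.uIcc_of_le hn1, Set.mem_Icc]
        push_neg
        intro h'
        linarith
      have hintval : ∫ x in (1:ℝ)..(n:ℝ), x ^ (q - β) = Real.log (n:ℝ) := by
        rw [hexp]
        simp only [Real.rpow_neg_one]
        rw [integral_inv hzero, div_one]
      rw [hintval, hnββ]
      ring
    have Btail : (∫⁻ ξ in Set.Ioi ((n:ℝ)),
        ENNReal.ofReal (phiq q ξ * ⨆ s : Set.Ici (0:ℝ), gfun n α c ω ξ (s:ℝ))) ≤ ENNReal.ofReal (1 / (α - q) * Real.log (n:ℝ) * (n:ℝ) ^ (-(q + 1))) := by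
      refine (hPtail1 n (n:ℝ) hn1).trans (ENNReal.ofReal_le_ofReal ?_)
      have hqα : q - α = -(q + 1) := by rw [hcase]; ring
      rw [hqα]
      calc (n:ℝ) ^ (-(q + 1)) / (α - q) = 1 / (α - q) * (n:ℝ) ^ (-(q + 1)) := by ring
        _ ≤ 1 / (α - q) * Real.log (n:ℝ) * (n:ℝ) ^ (-(q + 1)) :=
          hfac _ (div_nonneg zero_le_one (by linarith))
    calc _ ≤ ENNReal.ofReal (K2 * c ^ (-β) * Real.log (n:ℝ) * (n:ℝ) ^ (-(q + 1)))
          + ENNReal.ofReal (K2 * Real.log (n:ℝ) * (n:ℝ) ^ (-(q + 1)))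
          + ENNReal.ofReal (1 / (α - q) * Real.log (n:ℝ) * (n:ℝ) ^ (-(q + 1))) :=
        add_le_add (add_le_add B0 Bmid) Btail
      _ = ENNReal.ofReal ((K2 * c ^ (-β) + K2 + 1 / (α - q)) * Real.log (n:ℝ)
            * (n:ℝ) ^ (-(q + 1))) := by
        have ht1 : (0:ℝ) ≤ K2 * c ^ (-β) * Real.log (n:ℝ) * (n:ℝ) ^ (-(q + 1)) :=
          mul_nonneg (mul_nonneg (by positivity) hlog0) hnq1
        have ht2 : (0:ℝ) ≤ K2 * Real.log (n:ℝ) * (n:ℝ) ^ (-(q + 1)) :=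
          mul_nonneg (mul_nonneg hK2.le hlog0) hnq1
        have ht3 : (0:ℝ) ≤ 1 / (α - q) * Real.log (n:ℝ) * (n:ℝ) ^ (-(q + 1)) :=
          mul_nonneg (mul_nonneg (div_nonneg zero_le_one (by linarith)) hlog0) hnq1
        rw [← ENNReal.ofReal_add ht1 ht2, ← ENNReal.ofReal_add (add_nonneg ht1 ht2) ht3]
        congr 1
        ring
  -- Part 4 : α > 2q+1
  · intro hcase
    have hqβ : q - β < -1 := by rw [hβdef]; linarith
    have hβq1 : 0 < β - q - 1 := by rw [hβdef]; linarith
    have hM : 0 < K2 * c ^ (-β) + K2 * (1 / (β - q - 1)) := by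
      have h1 : 0 < K2 * c ^ (-β) := by positivity
      have h2 : 0 < K2 * (1 / (β - q - 1)) := by
        apply mul_pos hK2
        exact div_pos one_pos hβq1
      linarith
    refine ⟨K2 * c ^ (-β) + K2 * (1 / (β - q - 1)), hM, 1, fun n hn => ?_⟩
    have hn1 : (1:ℝ) ≤ (n:ℝ) := by exact_mod_cast hn
    have hnpos : (0:ℝ) < n := by linarith
    rw [hGs2 n]
    have Btail : (∫⁻ ξ in Set.Ioi ((1:ℝ)),
        ENNReal.ofReal (phiq q ξ * ⨆ s : Set.Ici (0:ℝ), gfun n α c ω ξ (s:ℝ))) ≤ ENNReal.ofReal (K2 * (n:ℝ) ^ (-β) * (1 / (β - q - 1))) := by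
      refine le_trans (piece_mono measurableSet_Ioi
        (fun ξ hξ => hkey2 n hn ξ hξ)) ?_
      rw [lint_tail one_pos hqβ (by positivity)]
      refine le_of_eq ?_
      congr 1
      rw [Real.one_rpow, neg_div, show β - q - 1 = -(q - β + 1) by ring, div_neg, one_div]
    calc _ ≤ ENNReal.ofReal (K2 * c ^ (-β) * (n:ℝ) ^ (-β))
          + ENNReal.ofReal (K2 * (n:ℝ) ^ (-β) * (1 / (β - q - 1))) :=
        add_le_add (hP0b2 n hn) Btail
      _ = ENNReal.ofReal ((K2 * c ^ (-β) + K2 * (1 / (β - q - 1))) * (n:ℝ) ^ (-β)) := by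
        have ht1 : (0:ℝ) ≤ K2 * c ^ (-β) * (n:ℝ) ^ (-β) := by positivity
        have ht2 : (0:ℝ) ≤ K2 * (n:ℝ) ^ (-β) * (1 / (β - q - 1)) :=
          mul_nonneg (mul_nonneg hK2.le (Real.rpow_nonneg hnpos.le _))
            (div_nonneg zero_le_one hβq1.le)
        rw [← ENNReal.ofReal_add ht1 ht2]
        congr 1
        ring

end
end

section
/- Let α > q > 0. For t ≥ 0 define the holomorphic function f_{t,α}(z) := e^{-t/(z+1)} (z+1)^{-α} on the right half-plane ℂ₊. Then sup_{t≥0} ⦀f_{t,α}⦀_q < ∞, and as t → ∞: ⦀f_{t,α}⦀_q = O(t^{q−α}) if q < α < 2q; ⦀f_{t,α}⦀_q = O(t^{-q} log t) if α = 2q; and ⦀f_{t,α}⦀_q = O(t^{-α/2}) if α > 2q. -/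
open Filter Topology MeasureTheory

noncomputable section

/-- The weighted norm `⦀f⦀_q = ∫₀^∞ φ_q(ξ) sup_{η ∈ ℝ} |f'(ξ + iη)| dξ`, as an extended real
number (so that finiteness is part of any upper bound). -/
def wnorm (q : ℝ) (f : ℂ → ℂ) : ENNReal :=
  ∫⁻ ξ in Set.Ioi (0 : ℝ),
    ENNReal.ofReal (phiq q ξ * ⨆ η : ℝ, ‖deriv f (ξ + η * Complex.I)‖)

/-- `f_{t,α}(z) = e^{-t/(z+1)} (z+1)^{-α}` (principal power). -/
def fInv (t α : ℝ) (z : ℂ) : ℂ :=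
  Complex.exp (-(t : ℂ) / (z + 1)) * (z + 1) ^ (-(α : ℂ))

namespace WnormAux


def Cc (m : ℝ) : ℝ := (2*m)^m + 1

lemma Cc_pos {m : ℝ} (hm : 0 ≤ m) : 0 < Cc m := by
  have : (0:ℝ) ≤ (2*m)^m := Real.rpow_nonneg (by linarith) m
  unfold Cc; linarith

lemma exp_neg_mul_rpow_le {s m : ℝ} (hs : 0 ≤ s) (hm : 0 ≤ m) :
    Real.exp (-s) * s ^ m ≤ Cc m := by
  have hCc : 0 < Cc m := Cc_pos hm
  rcases eq_or_lt_of_le hm with rfl|hm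
  · simp only [Real.rpow_zero, mul_one, Cc]
    have := Real.exp_le_one_iff.mpr (neg_nonpos.mpr hs)
    norm_num
    linarith
  rcases eq_or_lt_of_le hs with rfl|hs
  · rw [Real.zero_rpow hm.ne']
    simpa using hCc.le
  have h2m : (0:ℝ) < 2*m := by linarith
  have key : s ^ m ≤ (2*m)^m * Real.exp (s/2) := by
    have h0 : s ^ m = (2*m)^m * (s/(2*m))^m := by
      rw [← Real.mul_rpow h2m.le (by positivity)]
      congr 1; field_simp
    rw [h0]
    have h1 : (s/(2*m))^m ≤ Real.exp (s/2) := by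
      have hpos : (0:ℝ) < s/(2*m) := by positivity
      calc (s/(2*m))^m = Real.exp (Real.log (s/(2*m)) * m) := by
            rw [Real.rpow_def_of_pos hpos]
        _ ≤ Real.exp ((s/(2*m) - 1) * m) := by
            apply Real.exp_le_exp.mpr
            have := Real.log_le_sub_one_of_pos hpos
            nlinarith
        _ ≤ Real.exp (s/2) := by
            apply Real.exp_le_exp.mpr
            have : (s/(2*m) - 1) * m = s/2 - m := by field_simp
            rw [this]; linarith
    have hn : (0:ℝ) ≤ (2*m)^m := Real.rpow_nonneg h2m.le m
    exact mul_le_mul_of_nonneg_left h1 hn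
  calc Real.exp (-s) * s ^ m ≤ Real.exp (-s) * ((2*m)^m * Real.exp (s/2)) := by
        exact mul_le_mul_of_nonneg_left key (Real.exp_nonneg _)
    _ = (2*m)^m * (Real.exp (-s) * Real.exp (s/2)) := by ring
    _ = (2*m)^m * Real.exp (-(s/2)) := by
        rw [← Real.exp_add]; ring_nf
    _ ≤ (2*m)^m * 1 := by
        apply mul_le_mul_of_nonneg_left _ (Real.rpow_nonneg h2m.le m)
        exact Real.exp_le_one_iff.mpr (by linarith)
    _ ≤ Cc m := by unfold Cc; linarith




/-- master scalar bound -/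
lemma master {β m t u r : ℝ} (hm : 0 ≤ m) (hmβ : 2*m ≤ β) (ht : 0 < t)
    (hu : 1 ≤ u) (hr : u ≤ r) :
    Real.exp (-(t*u/r^2)) * r^(-β) ≤ Cc m * t^(-m) * u^(m-β) := by
  have hu0 : (0:ℝ) < u := lt_of_lt_of_le one_pos hu
  have hr0 : (0:ℝ) < r := lt_of_lt_of_le hu0 hr
  have hC : 0 < Cc m := Cc_pos hm
  set s := t*u/r^2 with hs_def
  have hs : 0 < s := by positivity
  have hsm0 : (0:ℝ) < s^m := Real.rpow_pos_of_pos hs m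
  have h1 : Real.exp (-s) ≤ Cc m * s^(-m) := by
    have h := exp_neg_mul_rpow_le hs.le hm
    rw [Real.rpow_neg hs.le, ← div_eq_mul_inv, le_div_iff₀ hsm0]
    linarith
  have hlog : Real.log s = Real.log t + Real.log u - 2 * Real.log r := by
    rw [hs_def, Real.log_div (by positivity) (by positivity),
      Real.log_mul ht.ne' hu0.ne', Real.log_pow]
    push_cast; ring
  have hsm : s^(-m) = t^(-m) * u^(-m) * r^(2*m) := by
    rw [Real.rpow_def_of_pos hs, Real.rpow_def_of_pos ht, Real.rpow_def_of_pos hu0,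
      Real.rpow_def_of_pos hr0, hlog, ← Real.exp_add, ← Real.exp_add]
    congr 1; ring
  have hnn : (0:ℝ) ≤ Cc m * t^(-m) * u^(-m) :=
    mul_nonneg (mul_nonneg hC.le (Real.rpow_nonneg ht.le _)) (Real.rpow_nonneg hu0.le _)
  calc Real.exp (-s) * r^(-β) ≤ (Cc m * s^(-m)) * r^(-β) := by
        exact mul_le_mul_of_nonneg_right h1 (Real.rpow_nonneg hr0.le _)
    _ = Cc m * t^(-m) * u^(-m) * (r^(2*m) * r^(-β)) := by rw [hsm]; ring
    _ = Cc m * t^(-m) * u^(-m) * r^(2*m-β) := by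
        rw [← Real.rpow_add hr0]; ring_nf
    _ ≤ Cc m * t^(-m) * u^(-m) * u^(2*m-β) := by
        exact mul_le_mul_of_nonneg_left
          (Real.rpow_le_rpow_of_nonpos hu0 hr (by linarith)) hnn
    _ = Cc m * t^(-m) * (u^(-m) * u^(2*m-β)) := by ring
    _ = Cc m * t^(-m) * u^(m-β) := by
        rw [← Real.rpow_add hu0]; congr 1; ring

/-- uniform scalar bound : t e^{-tu/r²} r^{-β} ≤ u^{1-β} for β ≥ 2 -/
lemma master_unif {β t u r : ℝ} (hβ : 2 ≤ β) (ht : 0 ≤ t) (hu : 1 ≤ u) (hr : u ≤ r) :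
    t * Real.exp (-(t*u/r^2)) * r^(-β) ≤ u^(1-β) := by
  have hu0 : (0:ℝ) < u := lt_of_lt_of_le one_pos hu
  have hr0 : (0:ℝ) < r := lt_of_lt_of_le hu0 hr
  set s := t*u/r^2 with hs_def
  have hs : 0 ≤ s := by positivity
  have hr2 : r^(2:ℕ) = r^((2:ℝ)) := by
    rw [← Real.rpow_natCast r 2]; norm_num
  have h1 : t * Real.exp (-s) ≤ r^2/u := by
    have hse : s * Real.exp (-s) ≤ 1 := by
      rw [Real.exp_neg, mul_inv_le_iff₀ (Real.exp_pos s), one_mul]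
      linarith [Real.add_one_le_exp s]
    have ht' : t = s * (r^2/u) := by rw [hs_def]; field_simp
    rw [ht']
    calc s * (r^2/u) * Real.exp (-s) = (s * Real.exp (-s)) * (r^2/u) := by ring
      _ ≤ 1 * (r^2/u) := mul_le_mul_of_nonneg_right hse (by positivity)
      _ = r^2/u := one_mul _
  calc t * Real.exp (-s) * r^(-β) ≤ (r^2/u) * r^(-β) := by
        exact mul_le_mul_of_nonneg_right h1 (Real.rpow_nonneg hr0.le _)
    _ = u⁻¹ * (r^((2:ℝ)) * r^(-β)) := by rw [← hr2]; ring
    _ = u⁻¹ * r^(2-β) := by rw [← Real.rpow_add hr0]; ring_nf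
    _ ≤ u⁻¹ * u^(2-β) := by
        exact mul_le_mul_of_nonneg_left
          (Real.rpow_le_rpow_of_nonpos hu0 hr (by linarith)) (by positivity)
    _ = u^(-(1:ℝ)) * u^(2-β) := by rw [Real.rpow_neg_one]
    _ = u^(1-β) := by rw [← Real.rpow_add hu0]; congr 1; ring



lemma hasDerivAt_fInv (t α : ℝ) {z : ℂ} (hz : 0 < (z+1).re) :
    HasDerivAt (fInv t α)
      (Complex.exp (-(t:ℂ)/(z+1)) *
        ((t:ℂ) * (z+1)^(-(α:ℂ)-2) - (α:ℂ) * (z+1)^(-(α:ℂ)-1))) z := by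
  have hw0 : (z+1) ≠ 0 := by
    intro h; rw [h] at hz; simp at hz
  have hslit : (z+1) ∈ Complex.slitPlane := Or.inl hz
  have h1 : HasDerivAt (fun z : ℂ => z + 1) 1 z := (hasDerivAt_id z).add_const 1
  have hinv : HasDerivAt (fun z : ℂ => ((z:ℂ)+1)⁻¹) (-1/((z+1))^2) z := by
    exact h1.inv hw0
  have hg : HasDerivAt (fun z : ℂ => -(t:ℂ)/(z+1)) ((t:ℂ)/(z+1)^2) z := by
    have h2 := hinv.const_mul (-(t:ℂ))
    have e : -(t:ℂ) * (-1/((z+1))^2) = (t:ℂ)/(z+1)^2 := by ring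
    rw [e] at h2
    have hfun : (fun z : ℂ => -(t:ℂ)/(z+1)) = fun z : ℂ => -(t:ℂ) * (z+1)⁻¹ :=
      funext fun w => div_eq_mul_inv _ _
    rw [hfun]
    exact h2
  have hexp : HasDerivAt (fun z : ℂ => Complex.exp (-(t:ℂ)/(z+1)))
      (Complex.exp (-(t:ℂ)/(z+1)) * ((t:ℂ)/(z+1)^2)) z := hg.cexp
  have hpow : HasDerivAt (fun z : ℂ => (z+1)^(-(α:ℂ)))
      (-(α:ℂ) * (z+1)^(-(α:ℂ)-1) * 1) z := HasDerivAt.cpow_const h1 hslit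
  have hmul := hexp.mul hpow
  have hpow2 : (z+1)^(-(α:ℂ)-2) = (z+1)^(-(α:ℂ)) / (z+1)^2 := by
    rw [show -(α:ℂ)-2 = -(α:ℂ) + (-2) by ring, Complex.cpow_add _ _ hw0]
    rw [show ((-2:ℂ)) = ((-2 : ℤ) : ℂ) by norm_num, Complex.cpow_intCast, div_eq_mul_inv]
    congr 1
  convert hmul using 1
  · exact rfl
  · exact rfl
  · exact rfl
  rw [hpow2]
  have h2 : ((z+1):ℂ)^2 ≠ 0 := pow_ne_zero _ hw0
  field_simp
  ring


lemma abs_deriv_le {t α : ℝ} (ht : 0 ≤ t) (hα : 0 ≤ α) {ξ : ℝ} (hξ : 0 < ξ) (η : ℝ) :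
    ‖deriv (fInv t α) (ξ + η * Complex.I)‖ ≤
      Real.exp (-(t*(ξ+1)/(‖(ξ:ℂ) + η*Complex.I + 1‖)^2)) *
        (t * (‖(ξ:ℂ) + η*Complex.I + 1‖)^(-(α+2))
          + α * (‖(ξ:ℂ) + η*Complex.I + 1‖)^(-(α+1))) := by
  set z : ℂ := (ξ:ℂ) + η*Complex.I with hz_def
  have hre : (z+1).re = ξ + 1 := by simp [hz_def]
  have him : (z+1).im = η := by simp [hz_def]
  have hz : 0 < (z+1).re := by rw [hre]; linarith
  have hw0 : z + 1 ≠ 0 := by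
    intro h; rw [h] at hz; simp at hz
  set r : ℝ := ‖z+1‖ with hr_def
  have hr0 : 0 < r := norm_pos_iff.mpr hw0
  rw [(hasDerivAt_fInv t α hz).deriv]
  have habs_exp : ‖Complex.exp (-(t:ℂ)/(z+1))‖ =
      Real.exp (-(t*(ξ+1)/r^2)) := by
    rw [Complex.norm_exp]
    congr 1
    rw [Complex.div_re, Complex.normSq_eq_norm_sq, hre, him, ← hr_def]
    simp only [Complex.neg_re, Complex.ofReal_re, Complex.neg_im, Complex.ofReal_im, neg_zero]
    field_simp
    ring
  have habs_pow : ∀ c : ℝ, ‖(z+1)^(-(α:ℂ)-c)‖ = r^(-(α+c)) := by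
    intro c
    rw [Complex.norm_cpow_of_ne_zero hw0]
    have h1 : (-(α:ℂ)-c).re = -(α+c) := by simp; ring
    have h2 : (-(α:ℂ)-c).im = 0 := by simp
    rw [h1, h2, mul_zero, Real.exp_zero, div_one]
  have h2' : ‖(z+1)^(-(α:ℂ)-2)‖ = r^(-(α+2)) := by
    have := habs_pow 2; norm_num at this ⊢; exact this
  have h1' : ‖(z+1)^(-(α:ℂ)-1)‖ = r^(-(α+1)) := by
    have := habs_pow 1; norm_num at this ⊢; exact this
  rw [norm_mul, habs_exp]
  apply mul_le_mul_of_nonneg_left _ (Real.exp_nonneg _)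
  calc ‖(t:ℂ) * (z+1)^(-(α:ℂ)-2) - (α:ℂ) * (z+1)^(-(α:ℂ)-1)‖
      ≤ ‖(t:ℂ) * (z+1)^(-(α:ℂ)-2)‖ + ‖(α:ℂ) * (z+1)^(-(α:ℂ)-1)‖ := by
        exact norm_sub_le _ _
    _ = t * r^(-(α+2)) + α * r^(-(α+1)) := by
        rw [norm_mul, norm_mul, h2', h1', Complex.norm_real, Complex.norm_real, Real.norm_eq_abs, Real.norm_eq_abs,
          abs_of_nonneg ht, abs_of_nonneg hα]

lemma sup_deriv_le {t α : ℝ} (ht : 0 ≤ t) (hα : 0 ≤ α) {ξ B : ℝ} (hξ : 0 < ξ)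
    (hB : ∀ r : ℝ, ξ+1 ≤ r →
      Real.exp (-(t*(ξ+1)/r^2)) * (t * r^(-(α+2)) + α * r^(-(α+1))) ≤ B) :
    (⨆ η : ℝ, ‖deriv (fInv t α) (ξ + η * Complex.I)‖) ≤ B := by
  apply ciSup_le
  intro η
  refine (abs_deriv_le ht hα hξ η).trans (hB _ ?_)
  have : ((ξ:ℂ) + η*Complex.I + 1).re = ξ + 1 := by simp
  calc ξ + 1 = ((ξ:ℂ) + η*Complex.I + 1).re := this.symm
    _ ≤ ‖(ξ:ℂ) + η*Complex.I + 1‖ := Complex.re_le_norm _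



lemma meas_aux (a c b : ℝ) :
    Measurable fun ξ : ℝ => ENNReal.ofReal ((1+ξ)^a * (c * (1+ξ)^b)) := by
  apply ENNReal.measurable_ofReal.comp
  fun_prop

lemma lint_term {q p c : ℝ} (hc : 0 ≤ c) {s : Set ℝ} (hs : MeasurableSet s)
    (hsub : s ⊆ Set.Ioi 0) :
    ∫⁻ ξ in s, ENNReal.ofReal ((1+ξ)^q * (c * (1+ξ)^p)) =
      ENNReal.ofReal c * ∫⁻ ξ in s, ENNReal.ofReal ((1+ξ)^(q+p)) := by
  rw [← lintegral_const_mul' _ _ ENNReal.ofReal_ne_top]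
  apply setLIntegral_congr_fun hs
  intro ξ hξ
  have h0 : (0:ℝ) < 1 + ξ := by
    have := hsub hξ; simp only [Set.mem_Ioi] at this; linarith
  dsimp only
  rw [← ENNReal.ofReal_mul hc]
  congr 1
  rw [Real.rpow_add h0]
  ring

lemma lint_tail_le {p c : ℝ} (hp : p < -1) (hc : 1 ≤ c) :
    ∫⁻ ξ in Set.Ioi c, ENNReal.ofReal ((1+ξ)^p) ≤ ENNReal.ofReal (c^(p+1)/(-p-1)) := by
  have hc0 : (0:ℝ) < c := by linarith
  have hmeas : Measurable fun ξ : ℝ => ENNReal.ofReal (ξ^p) := by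
    apply ENNReal.measurable_ofReal.comp; fun_prop
  have step1 : ∫⁻ ξ in Set.Ioi c, ENNReal.ofReal ((1+ξ)^p) ≤
      ∫⁻ ξ in Set.Ioi c, ENNReal.ofReal (ξ^p) := by
    apply setLIntegral_mono hmeas
    intro ξ hξ
    simp only [Set.mem_Ioi] at hξ
    apply ENNReal.ofReal_le_ofReal
    exact Real.rpow_le_rpow_of_nonpos (by linarith) (by linarith) (by linarith)
  have step2 : ∫⁻ ξ in Set.Ioi c, ENNReal.ofReal (ξ^p) =
      ENNReal.ofReal (∫ ξ in Set.Ioi c, ξ^p) := by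
    rw [ofReal_integral_eq_lintegral_ofReal (integrableOn_Ioi_rpow_of_lt hp hc0)]
    apply (ae_restrict_iff' measurableSet_Ioi).mpr
    apply ae_of_all
    intro ξ hξ
    simp only [Set.mem_Ioi] at hξ
    exact Real.rpow_nonneg (by linarith) p
  refine step1.trans ?_
  rw [step2, integral_Ioi_rpow_of_lt hp hc0]
  apply ENNReal.ofReal_le_ofReal
  have hne : p + 1 ≠ 0 := by linarith
  have hne2 : -p - 1 ≠ 0 := by linarith
  have : -c^(p+1)/(p+1) = c^(p+1)/(-p-1) := by
    rw [div_eq_div_iff hne hne2]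
    ring
  rw [this]

lemma lint_head_eq {p T : ℝ} (hT : 0 ≤ T) :
    ∫⁻ ξ in Set.Ioc 0 T, ENNReal.ofReal ((1+ξ)^p) =
      ENNReal.ofReal (∫ x in (1:ℝ)..(T+1), x^p) := by
  have hint : IntegrableOn (fun ξ : ℝ => (1+ξ)^p) (Set.Ioc 0 T) := by
    apply (ContinuousOn.integrableOn_compact isCompact_Icc ?_).mono_set Set.Ioc_subset_Icc_self
    apply ContinuousOn.rpow_const (by fun_prop)
    intro x hx
    left
    have : (0:ℝ) ≤ x := hx.1
    intro h; linarith [h ▸ this]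
  rw [← ofReal_integral_eq_lintegral_ofReal hint]
  · congr 1
    rw [← intervalIntegral.integral_of_le hT]
    have : ∫ ξ in (0:ℝ)..T, (1+ξ)^p = ∫ ξ in (0:ℝ)..T, (ξ+1)^p := by
      apply intervalIntegral.integral_congr
      intro x _; dsimp only; rw [add_comm]
    rw [this, intervalIntegral.integral_comp_add_right (fun x => x^p) 1]
    norm_num
  · apply (ae_restrict_iff' measurableSet_Ioc).mpr
    apply ae_of_all
    intro ξ hξ
    exact Real.rpow_nonneg (by linarith [hξ.1]) p

lemma lint_head_gt {p T : ℝ} (hp : -1 < p) (hT : 0 ≤ T) :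
    ∫⁻ ξ in Set.Ioc 0 T, ENNReal.ofReal ((1+ξ)^p) ≤
      ENNReal.ofReal ((T+1)^(p+1)/(p+1)) := by
  rw [lint_head_eq hT]
  apply ENNReal.ofReal_le_ofReal
  rw [integral_rpow (Or.inl hp), Real.one_rpow]
  have h1 : (0:ℝ) < p+1 := by linarith
  have hT1 : (0:ℝ) ≤ (T+1)^(p+1) := Real.rpow_nonneg (by linarith) _
  gcongr
  linarith

lemma lint_head_neg_one {T : ℝ} (hT : 0 ≤ T) :
    ∫⁻ ξ in Set.Ioc 0 T, ENNReal.ofReal ((1+ξ)^(-1:ℝ)) ≤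
      ENNReal.ofReal (Real.log (T+1)) := by
  rw [lint_head_eq hT]
  apply ENNReal.ofReal_le_ofReal
  have h1 : ∫ x in (1:ℝ)..(T+1), x^(-1:ℝ) = ∫ x in (1:ℝ)..(T+1), x⁻¹ := by
    apply intervalIntegral.integral_congr
    intro x _
    dsimp only
    rw [show (-1:ℝ) = ((-1:ℤ):ℝ) by norm_num, Real.rpow_intCast, zpow_neg_one]
  have h0 : (0:ℝ) ∉ Set.uIcc (1:ℝ) (T+1) := by
    rw [Set.mem_uIcc]
    push_neg
    constructor <;> intro h <;> linarith
  rw [h1, integral_inv h0]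
  rw [div_one]

lemma lint_full_le {p : ℝ} (hp : p < -1) :
    ∫⁻ ξ in Set.Ioi 0, ENNReal.ofReal ((1+ξ)^p) ≤ ENNReal.ofReal (1 + 1/(-p-1)) := by
  rw [← Set.Ioc_union_Ioi_eq_Ioi (zero_le_one (α := ℝ))]
  refine (lintegral_union_le _ _ _).trans ?_
  have h1 : ∫⁻ ξ in Set.Ioc (0:ℝ) 1, ENNReal.ofReal ((1+ξ)^p) ≤ ENNReal.ofReal 1 := by
    calc ∫⁻ ξ in Set.Ioc (0:ℝ) 1, ENNReal.ofReal ((1+ξ)^p)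
        ≤ ∫⁻ _ in Set.Ioc (0:ℝ) 1, 1 := by
          apply setLIntegral_mono measurable_one
          intro ξ hξ
          simp only [Pi.one_apply]
          rw [show (1:ENNReal) = ENNReal.ofReal 1 by simp]
          apply ENNReal.ofReal_le_ofReal
          exact Real.rpow_le_one_of_one_le_of_nonpos (by linarith [hξ.1]) (by linarith)
      _ = volume (Set.Ioc (0:ℝ) 1) := setLIntegral_one _
      _ = ENNReal.ofReal 1 := by rw [Real.volume_Ioc]; norm_num
  have h2 := lint_tail_le hp (le_refl (1:ℝ))
  rw [Real.one_rpow] at h2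
  have hpos : (0:ℝ) ≤ 1/(-p-1) := by
    have h3 : (0:ℝ) < -p-1 := by linarith
    positivity
  calc _ ≤ ENNReal.ofReal 1 + ENNReal.ofReal (1/(-p-1)) := add_le_add h1 h2
    _ = ENNReal.ofReal (1 + 1/(-p-1)) := (ENNReal.ofReal_add zero_le_one hpos).symm


lemma sup_nonneg' (f : ℂ → ℂ) (ξ : ℝ) :
    0 ≤ ⨆ η : ℝ, ‖deriv f (ξ + η * Complex.I)‖ :=
  Real.iSup_nonneg fun η => norm_nonneg _

lemma phiq_le {q ξ : ℝ} (hq : 0 < q) (hξ : 0 < ξ) : phiq q ξ ≤ (1+ξ)^q := by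
  unfold phiq
  split_ifs with h
  · calc (1:ℝ) = (1:ℝ)^q := (Real.one_rpow q).symm
      _ ≤ (1+ξ)^q := Real.rpow_le_rpow zero_le_one (by linarith) hq.le
  · exact Real.rpow_le_rpow (by linarith) (by linarith) hq.le

lemma phiq_nonneg {q ξ : ℝ} (hξ : 0 < ξ) : 0 ≤ phiq q ξ := by
  unfold phiq; split_ifs with h
  · exact zero_le_one
  · exact Real.rpow_nonneg (by linarith) q

lemma region_bound {q : ℝ} (hq : 0 < q) (f : ℂ → ℂ) {s : Set ℝ} (hs : MeasurableSet s)
    (hsub : s ⊆ Set.Ioi 0) {c₁ c₂ p₁ p₂ : ℝ} (hc₁ : 0 ≤ c₁) (hc₂ : 0 ≤ c₂)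
    (hB : ∀ ξ ∈ s, (⨆ η : ℝ, ‖deriv f (ξ + η * Complex.I)‖) ≤
      c₁ * (1+ξ)^p₁ + c₂ * (1+ξ)^p₂) :
    (∫⁻ ξ in s, ENNReal.ofReal (phiq q ξ * ⨆ η : ℝ, ‖deriv f (ξ + η * Complex.I)‖))
      ≤ ENNReal.ofReal c₁ * (∫⁻ ξ in s, ENNReal.ofReal ((1+ξ)^(q+p₁)))
        + ENNReal.ofReal c₂ * (∫⁻ ξ in s, ENNReal.ofReal ((1+ξ)^(q+p₂))) := by
  rw [← lint_term hc₁ hs hsub, ← lint_term hc₂ hs hsub,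
    ← lintegral_add_left (meas_aux q c₁ p₁)]
  apply setLIntegral_mono ((meas_aux q c₁ p₁).add (meas_aux q c₂ p₂))
  intro ξ hξ
  have hξ0 : 0 < ξ := hsub hξ
  have h1 : (0:ℝ) < 1+ξ := by linarith
  calc ENNReal.ofReal (phiq q ξ * ⨆ η : ℝ, ‖deriv f (ξ + η * Complex.I)‖)
      ≤ ENNReal.ofReal ((1+ξ)^q * (c₁ * (1+ξ)^p₁ + c₂ * (1+ξ)^p₂)) := by
        apply ENNReal.ofReal_le_ofReal
        exact mul_le_mul (phiq_le hq hξ0) (hB ξ hξ) (sup_nonneg' f ξ)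
          (Real.rpow_nonneg h1.le q)
    _ = ENNReal.ofReal ((1+ξ)^q * (c₁ * (1+ξ)^p₁) + (1+ξ)^q * (c₂ * (1+ξ)^p₂)) := by
        rw [← mul_add]
    _ ≤ _ := ENNReal.ofReal_add_le

lemma sup_le_mn {α t : ℝ} (hα : 0 < α) (ht : 0 < t) {ξ : ℝ} (hξ : 0 < ξ)
    {m n : ℝ} (hm : 0 ≤ m) (hn : 0 ≤ n) (hm2 : 2*m ≤ α+2) (hn2 : 2*n ≤ α+1) :
    (⨆ η : ℝ, ‖deriv (fInv t α) (ξ + η * Complex.I)‖) ≤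
      (Cc m * t^(1-m)) * (1+ξ)^(m-(α+2)) + (α * (Cc n * t^(-n))) * (1+ξ)^(n-(α+1)) := by
  apply sup_deriv_le ht.le hα.le hξ
  intro r hr
  have hu : 1 ≤ ξ+1 := by linarith
  have hA := master (β := α+2) hm hm2 ht hu hr
  have hB := master (β := α+1) hn hn2 ht hu hr
  have e1 : t * t^(-m) = t^(1-m) := by
    rw [show (1-m) = 1 + (-m) by ring, Real.rpow_add ht, Real.rpow_one]
  have hadd : ξ + 1 = 1 + ξ := add_comm ξ 1
  rw [mul_add]
  apply add_le_add
  · calc Real.exp (-(t*(ξ+1)/r^2)) * (t * r^(-(α+2)))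
        = t * (Real.exp (-(t*(ξ+1)/r^2)) * r^(-(α+2))) := by ring
      _ ≤ t * (Cc m * t^(-m) * (ξ+1)^(m-(α+2))) := mul_le_mul_of_nonneg_left hA ht.le
      _ = (Cc m * t^(1-m)) * (1+ξ)^(m-(α+2)) := by rw [← hadd, ← e1]; ring
  · calc Real.exp (-(t*(ξ+1)/r^2)) * (α * r^(-(α+1)))
        = α * (Real.exp (-(t*(ξ+1)/r^2)) * r^(-(α+1))) := by ring
      _ ≤ α * (Cc n * t^(-n) * (ξ+1)^(n-(α+1))) := mul_le_mul_of_nonneg_left hB hα.le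
      _ = (α * (Cc n * t^(-n))) * (1+ξ)^(n-(α+1)) := by rw [← hadd]; ring

lemma sup_le_unif {α t : ℝ} (hα : 0 < α) (ht : 0 ≤ t) {ξ : ℝ} (hξ : 0 < ξ) :
    (⨆ η : ℝ, ‖deriv (fInv t α) (ξ + η * Complex.I)‖) ≤
      (1+α) * (1+ξ)^(-(α+1)) := by
  apply sup_deriv_le ht hα.le hξ
  intro r hr
  have hu : 1 ≤ ξ+1 := by linarith
  have hu0 : (0:ℝ) < ξ+1 := by linarith
  have hr0 : (0:ℝ) < r := lt_of_lt_of_le hu0 hr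
  have hA := master_unif (β := α+2) (by linarith) ht hu hr
  have hterm1 : Real.exp (-(t*(ξ+1)/r^2)) * (t * r^(-(α+2))) ≤ (ξ+1)^(-(α+1)) := by
    calc Real.exp (-(t*(ξ+1)/r^2)) * (t * r^(-(α+2)))
        = t * Real.exp (-(t*(ξ+1)/r^2)) * r^(-(α+2)) := by ring
      _ ≤ (ξ+1)^(1-(α+2)) := hA
      _ = (ξ+1)^(-(α+1)) := by rw [show (1:ℝ)-(α+2) = -(α+1) by ring]
  have hterm2 : Real.exp (-(t*(ξ+1)/r^2)) * (α * r^(-(α+1))) ≤ α * (ξ+1)^(-(α+1)) := by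
    have h1 : r^(-(α+1)) ≤ (ξ+1)^(-(α+1)) :=
      Real.rpow_le_rpow_of_nonpos hu0 hr (by linarith)
    have h2 : Real.exp (-(t*(ξ+1)/r^2)) ≤ 1 := by
      apply Real.exp_le_one_iff.mpr
      have : (0:ℝ) ≤ t*(ξ+1)/r^2 := by positivity
      linarith
    calc Real.exp (-(t*(ξ+1)/r^2)) * (α * r^(-(α+1)))
        ≤ 1 * (α * (ξ+1)^(-(α+1))) := by
          apply mul_le_mul h2 (mul_le_mul_of_nonneg_left h1 hα.le) _ zero_le_one
          positivity
      _ = α * (ξ+1)^(-(α+1)) := one_mul _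
  calc Real.exp (-(t*(ξ+1)/r^2)) * (t * r^(-(α+2)) + α * r^(-(α+1)))
      = Real.exp (-(t*(ξ+1)/r^2)) * (t * r^(-(α+2)))
        + Real.exp (-(t*(ξ+1)/r^2)) * (α * r^(-(α+1))) := by ring
    _ ≤ (ξ+1)^(-(α+1)) + α * (ξ+1)^(-(α+1)) := add_le_add hterm1 hterm2
    _ = (1+α) * (1+ξ)^(-(α+1)) := by rw [add_comm ξ 1]; ring

lemma wnorm_split (q : ℝ) (f : ℂ → ℂ) {T : ℝ} (hT : 0 ≤ T) :
    wnorm q f ≤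
      (∫⁻ ξ in Set.Ioc 0 T, ENNReal.ofReal
        (phiq q ξ * ⨆ η : ℝ, ‖deriv f (ξ + η * Complex.I)‖))
      + ∫⁻ ξ in Set.Ioi T, ENNReal.ofReal
        (phiq q ξ * ⨆ η : ℝ, ‖deriv f (ξ + η * Complex.I)‖) := by
  unfold wnorm
  rw [← Set.Ioc_union_Ioi_eq_Ioi hT]
  exact lintegral_union_le _ _ _

lemma prod_le {c D R : ℝ} {I : ENNReal} (hc : 0 ≤ c) (hI : I ≤ ENNReal.ofReal D)
    (h : c * D ≤ R) : ENNReal.ofReal c * I ≤ ENNReal.ofReal R := by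
  calc ENNReal.ofReal c * I ≤ ENNReal.ofReal c * ENNReal.ofReal D := mul_le_mul_right hI _
    _ = ENNReal.ofReal (c*D) := (ENNReal.ofReal_mul hc).symm
    _ ≤ ENNReal.ofReal R := ENNReal.ofReal_le_ofReal h

lemma collect3 {t : ℝ} (ht : 0 < t) (a b : ℝ) : t^a * t^b = t^(a+b) :=
  (Real.rpow_add ht a b).symm

lemma t_add_one_rpow_le {t e : ℝ} (ht : 1 ≤ t) (he : 0 ≤ e) : (t+1)^e ≤ 2^e * t^e := by
  have h0 : (0:ℝ) < t := by linarith
  calc (t+1)^e ≤ (2*t)^e := Real.rpow_le_rpow (by linarith) (by linarith) he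
    _ = 2^e * t^e := Real.mul_rpow (by norm_num) h0.le

lemma head_piece {K t e P : ℝ} (hK : 0 ≤ K) (ht : 1 ≤ t) (hP : 0 < P+1) :
    (K * t^e) * ((t+1)^(P+1)/(P+1)) ≤ (K * 2^(P+1)/(P+1)) * t^(e+(P+1)) := by
  have h0 : (0:ℝ) < t := by linarith
  have h1 := t_add_one_rpow_le ht hP.le
  have h2 : (0:ℝ) ≤ t^e := Real.rpow_nonneg h0.le e
  calc (K * t^e) * ((t+1)^(P+1)/(P+1)) = (K * t^e * (t+1)^(P+1))/(P+1) := by ring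
    _ ≤ (K * t^e * (2^(P+1) * t^(P+1)))/(P+1) := by gcongr
    _ = (K * 2^(P+1)/(P+1)) * (t^e * t^(P+1)) := by ring
    _ = (K * 2^(P+1)/(P+1)) * t^(e+(P+1)) := by rw [collect3 h0]

lemma tail_piece {K t e P : ℝ} (ht : 0 < t) :
    (K * t^e) * (t^(P+1)/(-P-1)) = (K/(-P-1)) * t^(e+(P+1)) := by
  have h := collect3 ht e (P+1)
  calc (K * t^e) * (t^(P+1)/(-P-1)) = (K/(-P-1)) * (t^e * t^(P+1)) := by ring
    _ = (K/(-P-1)) * t^(e+(P+1)) := by rw [h]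

end WnormAux

set_option maxHeartbeats 1000000 in
open WnormAux in
/-- Proposition 3.11: for `α > q > 0`, `sup_{t ≥ 0} ⦀f_{t,α}⦀_q < ∞` and, as `t → ∞`,
`⦀f_{t,α}⦀_q = O(t^{q-α})` if `q < α < 2q`, `⦀f_{t,α}⦀_q = O(t^{-q} log t)` if `α = 2q`,
and `⦀f_{t,α}⦀_q = O(t^{-α/2})` if `α > 2q`. -/
theorem wnorm_fInv_bounds (α q : ℝ) (hq : 0 < q) (hα : q < α) :
    (∃ C : ℝ, ∀ t : ℝ, 0 ≤ t → wnorm q (fInv t α) ≤ ENNReal.ofReal C) ∧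
    (α < 2 * q →
      ∃ M : ℝ, 0 < M ∧ ∃ t₀ : ℝ, ∀ t : ℝ, t₀ ≤ t →
        wnorm q (fInv t α) ≤ ENNReal.ofReal (M * t ^ (q - α))) ∧
    (α = 2 * q →
      ∃ M : ℝ, 0 < M ∧ ∃ t₀ : ℝ, ∀ t : ℝ, t₀ ≤ t →
        wnorm q (fInv t α) ≤ ENNReal.ofReal (M * t ^ (-q) * Real.log t)) ∧
    (2 * q < α →
      ∃ M : ℝ, 0 < M ∧ ∃ t₀ : ℝ, ∀ t : ℝ, t₀ ≤ t →
        wnorm q (fInv t α) ≤ ENNReal.ofReal (M * t ^ (-(α / 2)))) := by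
  have hα0 : 0 < α := lt_trans hq hα
  refine ⟨?_, ?_, ?_, ?_⟩
  · -- uniform bound
    refine ⟨(1+α) * (1 + 1/(α-q)), fun t ht => ?_⟩
    have hB : ∀ ξ ∈ Set.Ioi (0:ℝ),
        (⨆ η : ℝ, ‖deriv (fInv t α) (ξ + η * Complex.I)‖) ≤
          (1+α) * (1+ξ)^(-(α+1)) + 0 * (1+ξ)^(-(α+1)) := by
      intro ξ hξ
      rw [zero_mul, add_zero]
      exact sup_le_unif hα0 ht hξ
    have h := region_bound hq (fInv t α) measurableSet_Ioi (subset_refl _)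
      (by linarith : (0:ℝ) ≤ 1+α) le_rfl hB
    have hI := lint_full_le (p := q + -(α+1)) (by linarith)
    rw [show -(q + -(α+1)) - 1 = α - q by ring] at hI
    have hw : wnorm q (fInv t α) = ∫⁻ ξ in Set.Ioi (0:ℝ), ENNReal.ofReal
        (phiq q ξ * ⨆ η : ℝ, ‖deriv (fInv t α) (ξ + η * Complex.I)‖) := rfl
    rw [hw]
    calc _ ≤ _ := h
      _ ≤ ENNReal.ofReal ((1+α) * (1 + 1/(α-q))) + 0 := by
          apply add_le_add
          · exact prod_le (by linarith) hI le_rfl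
          · simp
      _ = ENNReal.ofReal ((1+α) * (1 + 1/(α-q))) := add_zero _
  · -- q < α < 2q
    intro h2q
    have hm0 : (0:ℝ) ≤ 1+α/2 := by linarith
    have hn0 : (0:ℝ) ≤ (α+1)/2 := by linarith
    have hP1 : (0:ℝ) < q + ((1+α/2)-(α+2)) + 1 := by linarith
    have hP2 : (0:ℝ) < q + ((α+1)/2-(α+1)) + 1 := by linarith
    set K₁ := Cc (1+α/2) * 2^(q + ((1+α/2)-(α+2)) + 1)/(q + ((1+α/2)-(α+2)) + 1) with hK₁
    set K₂ := (α * Cc ((α+1)/2)) * 2^(q + ((α+1)/2-(α+1)) + 1)/(q + ((α+1)/2-(α+1)) + 1) with hK₂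
    set K₃ := Cc 0/(α+1-q) with hK₃
    set K₄ := (α * Cc 0)/(α-q) with hK₄
    have hK₁0 : 0 ≤ K₁ := by
      apply div_nonneg _ hP1.le
      exact mul_nonneg (Cc_pos hm0).le (Real.rpow_nonneg (by norm_num) _)
    have hK₂0 : 0 ≤ K₂ := by
      apply div_nonneg _ hP2.le
      exact mul_nonneg (mul_nonneg hα0.le (Cc_pos hn0).le) (Real.rpow_nonneg (by norm_num) _)
    have hK₃0 : 0 ≤ K₃ := div_nonneg (Cc_pos le_rfl).le (by linarith)
    have hK₄0 : 0 ≤ K₄ := div_nonneg (mul_nonneg hα0.le (Cc_pos le_rfl).le) (by linarith)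
    refine ⟨K₁ + K₂ + K₃ + K₄ + 1, by linarith, 3, fun t ht3 => ?_⟩
    have ht0 : (0:ℝ) < t := by linarith
    have ht1 : (1:ℝ) ≤ t := by linarith
    have hX : (0:ℝ) ≤ t^(q-α) := Real.rpow_nonneg ht0.le _
    have hc₁ : (0:ℝ) ≤ Cc (1+α/2) * t^(1-(1+α/2)) :=
      mul_nonneg (Cc_pos hm0).le (Real.rpow_nonneg ht0.le _)
    have hc₂ : (0:ℝ) ≤ α * (Cc ((α+1)/2) * t^(-((α+1)/2))) :=
      mul_nonneg hα0.le (mul_nonneg (Cc_pos hn0).le (Real.rpow_nonneg ht0.le _))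
    have hc₃ : (0:ℝ) ≤ Cc 0 * t^((1:ℝ)-0) :=
      mul_nonneg (Cc_pos le_rfl).le (Real.rpow_nonneg ht0.le _)
    have hc₄ : (0:ℝ) ≤ α * (Cc 0 * t^(-(0:ℝ))) :=
      mul_nonneg hα0.le (mul_nonneg (Cc_pos le_rfl).le (Real.rpow_nonneg ht0.le _))
    -- head
    have hBh : ∀ ξ ∈ Set.Ioc (0:ℝ) t,
        (⨆ η : ℝ, ‖deriv (fInv t α) (ξ + η * Complex.I)‖) ≤
          (Cc (1+α/2) * t^(1-(1+α/2))) * (1+ξ)^((1+α/2)-(α+2))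
          + (α * (Cc ((α+1)/2) * t^(-((α+1)/2)))) * (1+ξ)^((α+1)/2-(α+1)) :=
      fun ξ hξ => sup_le_mn hα0 ht0 hξ.1 hm0 hn0 (by linarith) (by linarith)
    have hhead := region_bound hq (fInv t α) measurableSet_Ioc Set.Ioc_subset_Ioi_self
      hc₁ hc₂ hBh
    have hI1 := lint_head_gt (p := q + ((1+α/2)-(α+2))) (T := t) (by linarith) ht0.le
    have hI2 := lint_head_gt (p := q + ((α+1)/2-(α+1))) (T := t) (by linarith) ht0.le
    have hR1 : (Cc (1+α/2) * t^(1-(1+α/2))) *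
        ((t+1)^((q + ((1+α/2)-(α+2)))+1)/((q + ((1+α/2)-(α+2)))+1)) ≤ K₁ * t^(q-α) := by
      have h := head_piece (K := Cc (1+α/2)) (e := 1-(1+α/2)) (Cc_pos hm0).le ht1 hP1
      rwa [show (1-(1+α/2))+((q + ((1+α/2)-(α+2)))+1) = q-α by ring, ← hK₁] at h
    have hR2 : (α * (Cc ((α+1)/2) * t^(-((α+1)/2)))) *
        ((t+1)^((q + ((α+1)/2-(α+1)))+1)/((q + ((α+1)/2-(α+1)))+1)) ≤ K₂ * t^(q-α) := by
      have h := head_piece (K := α * Cc ((α+1)/2)) (e := -((α+1)/2))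
        (mul_nonneg hα0.le (Cc_pos hn0).le) ht1 hP2
      rw [show (-((α+1)/2))+((q + ((α+1)/2-(α+1)))+1) = q-α by ring, ← hK₂] at h
      calc (α * (Cc ((α+1)/2) * t^(-((α+1)/2)))) *
          ((t+1)^((q + ((α+1)/2-(α+1)))+1)/((q + ((α+1)/2-(α+1)))+1))
          = ((α * Cc ((α+1)/2)) * t^(-((α+1)/2))) *
            ((t+1)^((q + ((α+1)/2-(α+1)))+1)/((q + ((α+1)/2-(α+1)))+1)) := by ring
        _ ≤ K₂ * t^(q-α) := h
    -- tail
    have hBt : ∀ ξ ∈ Set.Ioi t,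
        (⨆ η : ℝ, ‖deriv (fInv t α) (ξ + η * Complex.I)‖) ≤
          (Cc 0 * t^((1:ℝ)-0)) * (1+ξ)^((0:ℝ)-(α+2))
          + (α * (Cc 0 * t^(-(0:ℝ)))) * (1+ξ)^((0:ℝ)-(α+1)) :=
      fun ξ hξ => sup_le_mn hα0 ht0 (lt_trans ht0 hξ) le_rfl le_rfl
        (by linarith) (by linarith)
    have htail := region_bound hq (fInv t α) measurableSet_Ioi
      (Set.Ioi_subset_Ioi ht0.le) hc₃ hc₄ hBt
    have hI3 := lint_tail_le (p := q + ((0:ℝ)-(α+2))) (c := t) (by linarith) ht1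
    have hI4 := lint_tail_le (p := q + ((0:ℝ)-(α+1))) (c := t) (by linarith) ht1
    have hR3 : (Cc 0 * t^((1:ℝ)-0)) *
        (t^((q + ((0:ℝ)-(α+2)))+1)/(-(q + ((0:ℝ)-(α+2)))-1)) ≤ K₃ * t^(q-α) := by
      apply le_of_eq
      calc (Cc 0 * t^((1:ℝ)-0)) *
          (t^((q + ((0:ℝ)-(α+2)))+1)/(-(q + ((0:ℝ)-(α+2)))-1))
          = (Cc 0/(-(q + ((0:ℝ)-(α+2)))-1)) * t^(((1:ℝ)-0)+((q + ((0:ℝ)-(α+2)))+1)) :=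
            tail_piece ht0
        _ = K₃ * t^(q-α) := by
            rw [hK₃, show -(q + ((0:ℝ)-(α+2)))-1 = α+1-q by ring,
              show ((1:ℝ)-0)+((q + ((0:ℝ)-(α+2)))+1) = q-α by ring]
    have hR4 : (α * (Cc 0 * t^(-(0:ℝ)))) *
        (t^((q + ((0:ℝ)-(α+1)))+1)/(-(q + ((0:ℝ)-(α+1)))-1)) ≤ K₄ * t^(q-α) := by
      apply le_of_eq
      calc (α * (Cc 0 * t^(-(0:ℝ)))) *
          (t^((q + ((0:ℝ)-(α+1)))+1)/(-(q + ((0:ℝ)-(α+1)))-1))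
          = ((α * Cc 0) * t^(-(0:ℝ))) *
            (t^((q + ((0:ℝ)-(α+1)))+1)/(-(q + ((0:ℝ)-(α+1)))-1)) := by ring
        _ = ((α * Cc 0)/(-(q + ((0:ℝ)-(α+1)))-1)) * t^((-(0:ℝ))+((q + ((0:ℝ)-(α+1)))+1)) :=
            tail_piece ht0
        _ = K₄ * t^(q-α) := by
            rw [hK₄, show -(q + ((0:ℝ)-(α+1)))-1 = α-q by ring,
              show (-(0:ℝ))+((q + ((0:ℝ)-(α+1)))+1) = q-α by ring]
    calc wnorm q (fInv t α) ≤ _ := wnorm_split q (fInv t α) ht0.le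
      _ ≤ (ENNReal.ofReal (K₁ * t^(q-α)) + ENNReal.ofReal (K₂ * t^(q-α)))
          + (ENNReal.ofReal (K₃ * t^(q-α)) + ENNReal.ofReal (K₄ * t^(q-α))) := by
          apply add_le_add
          · exact hhead.trans (add_le_add (prod_le hc₁ hI1 hR1) (prod_le hc₂ hI2 hR2))
          · exact htail.trans (add_le_add (prod_le hc₃ hI3 hR3) (prod_le hc₄ hI4 hR4))
      _ = ENNReal.ofReal (K₁ * t^(q-α) + K₂ * t^(q-α) + (K₃ * t^(q-α) + K₄ * t^(q-α))) := by
          rw [← ENNReal.ofReal_add (mul_nonneg hK₁0 hX) (mul_nonneg hK₂0 hX),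
            ← ENNReal.ofReal_add (mul_nonneg hK₃0 hX) (mul_nonneg hK₄0 hX),
            ← ENNReal.ofReal_add (by positivity) (by positivity)]
      _ ≤ ENNReal.ofReal ((K₁ + K₂ + K₃ + K₄ + 1) * t^(q-α)) := by
          apply ENNReal.ofReal_le_ofReal
          nlinarith [hX]
  · -- α = 2q
    intro hα2
    subst hα2
    have hm0 : (0:ℝ) ≤ 1+q := by linarith
    have hn0 : (0:ℝ) ≤ q := hq.le
    set K₁ := 2 * Cc (1+q) with hK₁
    set K₂ := 2 * ((2*q) * Cc q) with hK₂
    set K₃ := Cc 0/(q+1) with hK₃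
    set K₄ := (2*q) * Cc 0/q with hK₄
    have hK₁0 : 0 ≤ K₁ := by
      have := (Cc_pos hm0).le; rw [hK₁]; linarith
    have hK₂0 : 0 ≤ K₂ := by
      rw [hK₂]
      exact mul_nonneg (by norm_num) (mul_nonneg (by linarith) (Cc_pos hn0).le)
    have hK₃0 : 0 ≤ K₃ := div_nonneg (Cc_pos le_rfl).le (by linarith)
    have hK₄0 : 0 ≤ K₄ :=
      div_nonneg (mul_nonneg (by linarith) (Cc_pos le_rfl).le) hq.le
    refine ⟨K₁ + K₂ + K₃ + K₄ + 1, by linarith, 3, fun t ht3 => ?_⟩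
    have ht0 : (0:ℝ) < t := by linarith
    have ht1 : (1:ℝ) ≤ t := by linarith
    have hX : (0:ℝ) ≤ t^(-q) := Real.rpow_nonneg ht0.le _
    have hlog1 : (1:ℝ) ≤ Real.log t := by
      rw [Real.le_log_iff_exp_le ht0]
      calc Real.exp 1 ≤ 2.7182818286 := Real.exp_one_lt_d9.le
        _ ≤ t := by linarith
    have hXlog : (0:ℝ) ≤ t^(-q) * Real.log t := mul_nonneg hX (by linarith)
    have hlog2 : Real.log (t+1) ≤ 2 * Real.log t := by
      have h1 : t+1 ≤ t^(2:ℕ) := by nlinarith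
      have h2 := Real.log_le_log (by linarith) h1
      rwa [Real.log_pow, Nat.cast_ofNat] at h2
    have hc₁ : (0:ℝ) ≤ Cc (1+q) * t^(1-(1+q)) :=
      mul_nonneg (Cc_pos hm0).le (Real.rpow_nonneg ht0.le _)
    have hc₂ : (0:ℝ) ≤ (2*q) * (Cc q * t^(-q)) :=
      mul_nonneg (by linarith) (mul_nonneg (Cc_pos hn0).le hX)
    have hc₃ : (0:ℝ) ≤ Cc 0 * t^((1:ℝ)-0) :=
      mul_nonneg (Cc_pos le_rfl).le (Real.rpow_nonneg ht0.le _)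
    have hc₄ : (0:ℝ) ≤ (2*q) * (Cc 0 * t^(-(0:ℝ))) :=
      mul_nonneg (by linarith) (mul_nonneg (Cc_pos le_rfl).le (Real.rpow_nonneg ht0.le _))
    have hα0' : (0:ℝ) < 2*q := by linarith
    -- head
    have hBh : ∀ ξ ∈ Set.Ioc (0:ℝ) t,
        (⨆ η : ℝ, ‖deriv (fInv t (2*q)) (ξ + η * Complex.I)‖) ≤
          (Cc (1+q) * t^(1-(1+q))) * (1+ξ)^((1+q)-(2*q+2))
          + ((2*q) * (Cc q * t^(-q))) * (1+ξ)^(q-(2*q+1)) :=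
      fun ξ hξ => sup_le_mn hα0' ht0 hξ.1 hm0 hn0 (by linarith) (by linarith)
    have hhead := region_bound hq (fInv t (2*q)) measurableSet_Ioc Set.Ioc_subset_Ioi_self
      hc₁ hc₂ hBh
    have hI1 := lint_head_neg_one (T := t) ht0.le
    rw [show (-1:ℝ) = q + ((1+q)-(2*q+2)) by ring] at hI1
    have hI2 := lint_head_neg_one (T := t) ht0.le
    rw [show (-1:ℝ) = q + (q-(2*q+1)) by ring] at hI2
    have e1 : t^(1-(1+q)) = t^(-q) := by rw [show 1-(1+q) = -q by ring]
    have hR1 : (Cc (1+q) * t^(1-(1+q))) * Real.log (t+1) ≤ K₁ * (t^(-q) * Real.log t) := by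
      calc (Cc (1+q) * t^(1-(1+q))) * Real.log (t+1)
          ≤ (Cc (1+q) * t^(1-(1+q))) * (2 * Real.log t) :=
            mul_le_mul_of_nonneg_left hlog2 hc₁
        _ = K₁ * (t^(-q) * Real.log t) := by rw [e1, hK₁]; ring
    have hR2 : ((2*q) * (Cc q * t^(-q))) * Real.log (t+1) ≤ K₂ * (t^(-q) * Real.log t) := by
      calc ((2*q) * (Cc q * t^(-q))) * Real.log (t+1)
          ≤ ((2*q) * (Cc q * t^(-q))) * (2 * Real.log t) :=
            mul_le_mul_of_nonneg_left hlog2 hc₂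
        _ = K₂ * (t^(-q) * Real.log t) := by rw [hK₂]; ring
    -- tail
    have hBt : ∀ ξ ∈ Set.Ioi t,
        (⨆ η : ℝ, ‖deriv (fInv t (2*q)) (ξ + η * Complex.I)‖) ≤
          (Cc 0 * t^((1:ℝ)-0)) * (1+ξ)^((0:ℝ)-(2*q+2))
          + ((2*q) * (Cc 0 * t^(-(0:ℝ)))) * (1+ξ)^((0:ℝ)-(2*q+1)) :=
      fun ξ hξ => sup_le_mn hα0' ht0 (lt_trans ht0 hξ) le_rfl le_rfl
        (by linarith) (by linarith)
    have htail := region_bound hq (fInv t (2*q)) measurableSet_Ioi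
      (Set.Ioi_subset_Ioi ht0.le) hc₃ hc₄ hBt
    have hI3 := lint_tail_le (p := q + ((0:ℝ)-(2*q+2))) (c := t) (by linarith) ht1
    have hI4 := lint_tail_le (p := q + ((0:ℝ)-(2*q+1))) (c := t) (by linarith) ht1
    have hR3 : (Cc 0 * t^((1:ℝ)-0)) *
        (t^((q + ((0:ℝ)-(2*q+2)))+1)/(-(q + ((0:ℝ)-(2*q+2)))-1)) ≤ K₃ * (t^(-q) * Real.log t) := by
      have heq : (Cc 0 * t^((1:ℝ)-0)) *
          (t^((q + ((0:ℝ)-(2*q+2)))+1)/(-(q + ((0:ℝ)-(2*q+2)))-1)) = K₃ * t^(-q) := by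
        calc (Cc 0 * t^((1:ℝ)-0)) *
            (t^((q + ((0:ℝ)-(2*q+2)))+1)/(-(q + ((0:ℝ)-(2*q+2)))-1))
            = (Cc 0/(-(q + ((0:ℝ)-(2*q+2)))-1)) * t^(((1:ℝ)-0)+((q + ((0:ℝ)-(2*q+2)))+1)) :=
              tail_piece ht0
          _ = K₃ * t^(-q) := by
              rw [hK₃, show -(q + ((0:ℝ)-(2*q+2)))-1 = q+1 by ring,
                show ((1:ℝ)-0)+((q + ((0:ℝ)-(2*q+2)))+1) = -q by ring]
      rw [heq]
      calc K₃ * t^(-q) = K₃ * (t^(-q) * 1) := by ring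
        _ ≤ K₃ * (t^(-q) * Real.log t) := by
            apply mul_le_mul_of_nonneg_left _ hK₃0
            exact mul_le_mul_of_nonneg_left hlog1 hX
    have hR4 : ((2*q) * (Cc 0 * t^(-(0:ℝ)))) *
        (t^((q + ((0:ℝ)-(2*q+1)))+1)/(-(q + ((0:ℝ)-(2*q+1)))-1)) ≤ K₄ * (t^(-q) * Real.log t) := by
      have heq : ((2*q) * (Cc 0 * t^(-(0:ℝ)))) *
          (t^((q + ((0:ℝ)-(2*q+1)))+1)/(-(q + ((0:ℝ)-(2*q+1)))-1)) = K₄ * t^(-q) := by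
        calc ((2*q) * (Cc 0 * t^(-(0:ℝ)))) *
            (t^((q + ((0:ℝ)-(2*q+1)))+1)/(-(q + ((0:ℝ)-(2*q+1)))-1))
            = (((2*q) * Cc 0) * t^(-(0:ℝ))) *
              (t^((q + ((0:ℝ)-(2*q+1)))+1)/(-(q + ((0:ℝ)-(2*q+1)))-1)) := by ring
          _ = (((2*q) * Cc 0)/(-(q + ((0:ℝ)-(2*q+1)))-1)) *
              t^((-(0:ℝ))+((q + ((0:ℝ)-(2*q+1)))+1)) := tail_piece ht0
          _ = K₄ * t^(-q) := by
              rw [hK₄, show -(q + ((0:ℝ)-(2*q+1)))-1 = q by ring,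
                show (-(0:ℝ))+((q + ((0:ℝ)-(2*q+1)))+1) = -q by ring]
      rw [heq]
      calc K₄ * t^(-q) = K₄ * (t^(-q) * 1) := by ring
        _ ≤ K₄ * (t^(-q) * Real.log t) := by
            apply mul_le_mul_of_nonneg_left _ hK₄0
            exact mul_le_mul_of_nonneg_left hlog1 hX
    calc wnorm q (fInv t (2*q)) ≤ _ := wnorm_split q (fInv t (2*q)) ht0.le
      _ ≤ (ENNReal.ofReal (K₁ * (t^(-q) * Real.log t))
            + ENNReal.ofReal (K₂ * (t^(-q) * Real.log t)))
          + (ENNReal.ofReal (K₃ * (t^(-q) * Real.log t))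
            + ENNReal.ofReal (K₄ * (t^(-q) * Real.log t))) := by
          apply add_le_add
          · exact hhead.trans (add_le_add (prod_le hc₁ hI1 hR1) (prod_le hc₂ hI2 hR2))
          · exact htail.trans (add_le_add (prod_le hc₃ hI3 hR3) (prod_le hc₄ hI4 hR4))
      _ = ENNReal.ofReal (K₁ * (t^(-q) * Real.log t) + K₂ * (t^(-q) * Real.log t)
            + (K₃ * (t^(-q) * Real.log t) + K₄ * (t^(-q) * Real.log t))) := by
          rw [← ENNReal.ofReal_add (mul_nonneg hK₁0 hXlog) (mul_nonneg hK₂0 hXlog),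
            ← ENNReal.ofReal_add (mul_nonneg hK₃0 hXlog) (mul_nonneg hK₄0 hXlog),
            ← ENNReal.ofReal_add
              (add_nonneg (mul_nonneg hK₁0 hXlog) (mul_nonneg hK₂0 hXlog))
              (add_nonneg (mul_nonneg hK₃0 hXlog) (mul_nonneg hK₄0 hXlog))]
      _ ≤ ENNReal.ofReal ((K₁ + K₂ + K₃ + K₄ + 1) * t^(-q) * Real.log t) := by
          apply ENNReal.ofReal_le_ofReal
          nlinarith [hXlog]
  · -- α > 2q
    intro h2q
    have hm0 : (0:ℝ) ≤ 1+α/2 := by linarith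
    have hn0 : (0:ℝ) ≤ α/2 := by linarith
    have hD : (0:ℝ) ≤ 1 + 1/(α/2-q) := by
      have h3 : (0:ℝ) < α/2 - q := by linarith
      positivity
    set K₁ := Cc (1+α/2) * (1 + 1/(α/2-q)) with hK₁
    set K₂ := α * Cc (α/2) * (1 + 1/(α/2-q)) with hK₂
    have hK₁0 : 0 ≤ K₁ := mul_nonneg (Cc_pos hm0).le hD
    have hK₂0 : 0 ≤ K₂ := mul_nonneg (mul_nonneg hα0.le (Cc_pos hn0).le) hD
    refine ⟨K₁ + K₂ + 1, by linarith, 3, fun t ht3 => ?_⟩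
    have ht0 : (0:ℝ) < t := by linarith
    have hX : (0:ℝ) ≤ t^(-(α/2)) := Real.rpow_nonneg ht0.le _
    have hc₁ : (0:ℝ) ≤ Cc (1+α/2) * t^(1-(1+α/2)) :=
      mul_nonneg (Cc_pos hm0).le (Real.rpow_nonneg ht0.le _)
    have hc₂ : (0:ℝ) ≤ α * (Cc (α/2) * t^(-(α/2))) :=
      mul_nonneg hα0.le (mul_nonneg (Cc_pos hn0).le (Real.rpow_nonneg ht0.le _))
    have hB : ∀ ξ ∈ Set.Ioi (0:ℝ),
        (⨆ η : ℝ, ‖deriv (fInv t α) (ξ + η * Complex.I)‖) ≤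
          (Cc (1+α/2) * t^(1-(1+α/2))) * (1+ξ)^((1+α/2)-(α+2))
          + (α * (Cc (α/2) * t^(-(α/2)))) * (1+ξ)^((α/2)-(α+1)) :=
      fun ξ hξ => sup_le_mn hα0 ht0 hξ hm0 hn0 (by linarith) (by linarith)
    have h := region_bound hq (fInv t α) measurableSet_Ioi (subset_refl _) hc₁ hc₂ hB
    have hI1 := lint_full_le (p := q + ((1+α/2)-(α+2))) (by linarith)
    rw [show -(q + ((1+α/2)-(α+2))) - 1 = α/2 - q by ring] at hI1
    have hI2 := lint_full_le (p := q + ((α/2)-(α+1))) (by linarith)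
    rw [show -(q + ((α/2)-(α+1))) - 1 = α/2 - q by ring] at hI2
    have e1 : t^(1-(1+α/2)) = t^(-(α/2)) := by rw [show 1-(1+α/2) = -(α/2) by ring]
    have hw : wnorm q (fInv t α) = ∫⁻ ξ in Set.Ioi (0:ℝ), ENNReal.ofReal
        (phiq q ξ * ⨆ η : ℝ, ‖deriv (fInv t α) (ξ + η * Complex.I)‖) := rfl
    rw [hw]
    calc _ ≤ _ := h
      _ ≤ ENNReal.ofReal (K₁ * t^(-(α/2))) + ENNReal.ofReal (K₂ * t^(-(α/2))) := by
          apply add_le_add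
          · apply prod_le hc₁ hI1
            rw [e1, hK₁]; ring_nf; exact le_refl _
          · apply prod_le hc₂ hI2
            rw [hK₂]; ring_nf; exact le_refl _
      _ = ENNReal.ofReal (K₁ * t^(-(α/2)) + K₂ * t^(-(α/2))) :=
          (ENNReal.ofReal_add (mul_nonneg hK₁0 hX) (mul_nonneg hK₂0 hX)).symm
      _ ≤ ENNReal.ofReal ((K₁ + K₂ + 1) * t^(-(α/2))) := by
          apply ENNReal.ofReal_le_ofReal
          nlinarith [hX]

end
end

section
/- Let a, b ∈ ℝ satisfy |b| ≤ a, and let 0 ≤ δ ≤ 1. Then for all r > 0, (r² + 2δbr + b²)/(r² + 2δar + a²) ≤ ((r + δ|b|)/(r + δa))². -/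
/-- Lemma A.3: for `a, b ∈ ℝ` with `|b| ≤ a`, `0 ≤ δ ≤ 1` and `r > 0`,
`(r² + 2δbr + b²)/(r² + 2δar + a²) ≤ ((r + δ|b|)/(r + δa))²`. -/
theorem mobius_factor_ineq (a b δ r : ℝ) (hb : |b| ≤ a) (hδ0 : 0 ≤ δ) (hδ1 : δ ≤ 1)
    (hr : 0 < r) :
    (r ^ 2 + 2 * δ * b * r + b ^ 2) / (r ^ 2 + 2 * δ * a * r + a ^ 2) ≤
      ((r + δ * |b|) / (r + δ * a)) ^ 2 := by
  have ha : 0 ≤ a := (abs_nonneg b).trans hb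
  have hc0 : 0 ≤ |b| := abs_nonneg b
  have hbc : b ≤ |b| := le_abs_self b
  have hbsq : b ^ 2 = |b| ^ 2 := (sq_abs b).symm
  have hQ : 0 < r + δ * a := by positivity
  have hD : 0 < r ^ 2 + 2 * δ * a * r + a ^ 2 := by positivity
  rw [div_pow, div_le_div_iff₀ hD (by positivity)]
  have h1 : 0 ≤ (1 - δ^2) * (a - |b|) * (2*r*δ*a*|b| + r^2*(a + |b|)) := by
    have h3 : 0 ≤ 1 - δ^2 := by nlinarith
    have h4 := sub_nonneg.2 hb
    have h5 : 0 ≤ 2*r*δ*a*|b| + r^2*(a + |b|) := by positivity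
    exact mul_nonneg (mul_nonneg h3 h4) h5
  have h2 : 0 ≤ 2*δ*r*(|b| - b)*(r + δ*a)^2 := by
    have := sub_nonneg.2 hbc
    positivity
  nlinarith [h1, h2, hbsq]
end

section
/- For each α > 0 there exists a constant M > 0 such that for all n ∈ ℕ and all real numbers c > d ≥ 0, ∫₀^∞ (r+d)ⁿ/(r+c)^{n+α+1} dr ≤ M / ((c−d)^α · n^α). -/
open MeasureTheory

open Set Real in
private lemma lintegral_image_eq_lintegral_abs_deriv_mul' {s : Set ℝ} {f : ℝ → ℝ} {f' : ℝ → ℝ}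
    (hs : MeasurableSet s) (hf' : ∀ x ∈ s, HasDerivWithinAt f (f' x) s x)
    (hf : Set.InjOn f s) (g : ℝ → ENNReal) :
    ∫⁻ x in f '' s, g x = ∫⁻ x in s, ENNReal.ofReal |f' x| * g (f x) := by
  simpa only [ContinuousLinearMap.det_toSpanSingleton] using
    lintegral_image_eq_lintegral_abs_det_fderiv_mul volume hs
      (fun x hx => (hf' x hx).hasFDerivWithinAt) hf g

open Set Real in
private lemma key_integral (α : ℝ) (hα : 0 < α) {a : ℝ} (ha : 0 < a) :
    (∫⁻ t in Set.Ioi (0:ℝ), ENNReal.ofReal (Real.exp (-(a/t)) * t ^ (-(α+1)))) =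
      ENNReal.ofReal (Real.Gamma α / a ^ α) := by
  have himg : (fun x : ℝ => x⁻¹) '' Set.Ioi 0 = Set.Ioi 0 := by
    ext x
    constructor
    · rintro ⟨y, hy, rfl⟩; exact Set.mem_Ioi.2 (inv_pos.2 (Set.mem_Ioi.1 hy))
    · intro hx; exact ⟨x⁻¹, Set.mem_Ioi.2 (inv_pos.2 (Set.mem_Ioi.1 hx)), inv_inv x⟩
  rw [← himg, lintegral_image_eq_lintegral_abs_deriv_mul' measurableSet_Ioi
      (fun x hx => (hasDerivAt_inv (ne_of_gt hx)).hasDerivWithinAt)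
      (fun x _ y _ h => inv_injective h)]
  have hcongr : ∫⁻ x in Set.Ioi (0:ℝ),
      ENNReal.ofReal |-(x ^ 2)⁻¹| *
        ENNReal.ofReal (Real.exp (-(a / x⁻¹)) * (x⁻¹) ^ (-(α+1))) =
      ∫⁻ x in Set.Ioi (0:ℝ), ENNReal.ofReal (x ^ (α - 1) * Real.exp (-(a * x))) := by
    apply setLIntegral_congr_fun measurableSet_Ioi
    intro x hx
    beta_reduce
    have hx0 : (0:ℝ) < x := hx
    rw [← ENNReal.ofReal_mul (by positivity)]
    congr 1
    have h1 : a / x⁻¹ = a * x := by field_simp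
    have h2 : (x⁻¹ : ℝ) ^ (-(α+1)) = x ^ (α+1) := by
      rw [Real.inv_rpow hx0.le, Real.rpow_neg hx0.le, inv_inv]
    have h3 : x ^ (α+1) = x ^ (α-1) * x ^ 2 := by
      rw [← Real.rpow_natCast x 2, ← Real.rpow_add hx0]
      norm_num
      congr 1
      ring
    rw [h1, h2, h3, abs_neg, abs_inv, abs_pow, abs_of_pos hx0]
    field_simp
  rw [hcongr]
  have hint : IntegrableOn (fun x : ℝ => x ^ (α - 1) * Real.exp (-(a * x))) (Set.Ioi 0) := by
    simpa [Real.rpow_one, neg_mul] using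
      integrableOn_rpow_mul_exp_neg_mul_rpow (by linarith : (-1:ℝ) < α - 1) (zero_lt_one : (0:ℝ) < 1) ha
  rw [← ofReal_integral_eq_lintegral_ofReal hint ?nn]
  case nn =>
    filter_upwards [ae_restrict_mem measurableSet_Ioi] with x hx
    have hx0 : (0:ℝ) < x := hx
    positivity
  rw [integral_rpow_mul_exp_neg_mul_Ioi hα ha]
  congr 1
  rw [one_div, Real.inv_rpow ha.le, inv_mul_eq_div]

/-- Lemma A.4: for each `α > 0` there is `M > 0` such that for all `n ∈ ℕ` (with `n ≥ 1`)
and all reals `c > d ≥ 0`,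
`∫₀^∞ (r+d)ⁿ/(r+c)^{n+α+1} dr ≤ M / ((c-d)^α n^α)`. -/
theorem integral_ratio_le (α : ℝ) (hα : 0 < α) :
    ∃ M : ℝ, 0 < M ∧ ∀ n : ℕ, 1 ≤ n → ∀ c d : ℝ, 0 ≤ d → d < c →
      (∫⁻ r in Set.Ioi (0 : ℝ),
          ENNReal.ofReal ((r + d) ^ n / (r + c) ^ ((n : ℝ) + α + 1))) ≤
        ENNReal.ofReal (M / ((c - d) ^ α * (n : ℝ) ^ α)) := by
  refine ⟨Real.Gamma α, Real.Gamma_pos_of_pos hα, fun n hn c d hd hdc => ?_⟩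
  have hn0 : (0:ℝ) < n := by exact_mod_cast Nat.pos_of_ne_zero (by omega)
  have hcd : (0:ℝ) < c - d := sub_pos.2 hdc
  have hc : (0:ℝ) < c := lt_of_le_of_lt hd hdc
  set a : ℝ := n * (c - d) with ha_def
  have ha : 0 < a := mul_pos hn0 hcd
  have step1 : (∫⁻ r in Set.Ioi (0 : ℝ),
          ENNReal.ofReal ((r + d) ^ n / (r + c) ^ ((n : ℝ) + α + 1))) ≤
      ∫⁻ r in Set.Ioi (0:ℝ),
          ENNReal.ofReal (Real.exp (-(a/(r+c))) * (r+c) ^ (-(α+1))) := by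
    apply setLIntegral_mono
    · apply Measurable.ennreal_ofReal
      apply Measurable.mul
      · exact (measurable_const.div ((measurable_id.add_const c))).neg.exp
      · measurability
    · intro r hr
      have hr0 : (0:ℝ) < r := hr
      have ht : (0:ℝ) < r + c := by linarith
      apply ENNReal.ofReal_le_ofReal
      have hsplit : (r + c) ^ ((n : ℝ) + α + 1) = (r + c) ^ n * (r + c) ^ (α + 1) := by
        rw [add_assoc, Real.rpow_add ht, Real.rpow_natCast]
      have hbase : (r + d) / (r + c) ≤ Real.exp (-((c - d) / (r + c))) := by
        have h1 : (r + d) / (r + c) = 1 - (c - d) / (r + c) := by field_simp; ring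
        have h2 := Real.add_one_le_exp (-((c - d) / (r + c)))
        linarith
      have hbn : ((r + d) / (r + c)) ^ n ≤ Real.exp (-(a / (r + c))) := by
        calc ((r + d) / (r + c)) ^ n ≤ Real.exp (-((c - d) / (r + c))) ^ n :=
              pow_le_pow_left₀ (by positivity) hbase n
          _ = Real.exp (-(a / (r + c))) := by
              rw [← Real.exp_nat_mul]
              congr 1
              rw [ha_def]
              field_simp
      calc (r + d) ^ n / (r + c) ^ ((n : ℝ) + α + 1)
          = ((r + d) / (r + c)) ^ n * (r + c) ^ (-(α+1)) := by
            rw [hsplit, Real.rpow_neg ht.le, div_pow]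
            field_simp
        _ ≤ Real.exp (-(a / (r + c))) * (r + c) ^ (-(α+1)) := by
            apply mul_le_mul_of_nonneg_right hbn (Real.rpow_nonneg ht.le _)
  have step2 : (∫⁻ r in Set.Ioi (0:ℝ),
          ENNReal.ofReal (Real.exp (-(a/(r+c))) * (r+c) ^ (-(α+1)))) ≤
      ∫⁻ t in Set.Ioi (0:ℝ), ENNReal.ofReal (Real.exp (-(a/t)) * t ^ (-(α+1))) := by
    have himg : (fun x : ℝ => x + c) '' Set.Ioi 0 = Set.Ioi c := by
      simp [Set.image_add_const_Ioi]
    calc (∫⁻ r in Set.Ioi (0:ℝ),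
          ENNReal.ofReal (Real.exp (-(a/(r+c))) * (r+c) ^ (-(α+1))))
        = ∫⁻ r in Set.Ioi (0:ℝ), ENNReal.ofReal |(1:ℝ)| *
            ENNReal.ofReal (Real.exp (-(a/(r+c))) * (r+c) ^ (-(α+1))) := by
          simp only [abs_one, ENNReal.ofReal_one, one_mul]
      _ = ∫⁻ t in Set.Ioi c, ENNReal.ofReal (Real.exp (-(a/t)) * t ^ (-(α+1))) := by
          rw [← himg, lintegral_image_eq_lintegral_abs_deriv_mul' measurableSet_Ioi
            (fun x _ => (show HasDerivAt (fun x : ℝ => x + c) 1 x from (hasDerivAt_id x).add_const c).hasDerivWithinAt)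
            (fun x _ y _ h => by linarith [h] )]
      _ ≤ ∫⁻ t in Set.Ioi (0:ℝ), ENNReal.ofReal (Real.exp (-(a/t)) * t ^ (-(α+1))) :=
          lintegral_mono_set (Set.Ioi_subset_Ioi hc.le)
  refine (step1.trans step2).trans ?_
  rw [key_integral α hα ha]
  apply le_of_eq
  congr 1
  rw [ha_def, Real.mul_rpow hn0.le hcd.le, mul_comm ((n:ℝ)^α)]
end
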